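/- arXiv:1204.0813 — 7 statements merged into one kernel-verified Lean document; each statement's English description precedes it below -/
import Mathlib

section
/- Let k ≥ 1 and let F : ℝ^k → ℝ be interchangeable (i.e., F(μ_{σ(1)},…,μ_{σ(k)}) = F(μ_1,…,μ_k) for every permutation σ of {1,…,k}) and twice continuously differentiable on a neighborhood of the diagonal point a·𝟙 = (a,…,a) for some a ∈ ℝ. Then there exist constants C > 0 and δ > 0 such that for every μ = (μ_1,…,μ_k) ∈ ℝ^k with ‖μ − a·𝟙‖ < δ, one has |F(μ) − F(μ̄·𝟙)| ≤ C‖μ − μ̄·𝟙‖², where μ̄ = (1/k)∑_{j=1}^k μ_j is the arithmetic mean of the coordinates of μ. -/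
/-- At a diagonal point, the derivative of a symmetric function kills mean-zero vectors. -/
lemma fderiv_symm_diag (k : ℕ) (hk : 1 ≤ k) (F : (Fin k → ℝ) → ℝ)
    (hsym : ∀ (σ : Equiv.Perm (Fin k)) (μ : Fin k → ℝ), F (μ ∘ σ) = F μ)
    (m : ℝ) (hd : DifferentiableAt ℝ F (fun _ => m))
    (v : Fin k → ℝ) (hv : ∑ j, v j = 0) :
    fderiv ℝ F (fun _ => m) v = 0 := by
  set D := fderiv ℝ F (fun _ => m) with hD
  have hT : ∀ (σ : Equiv.Perm (Fin k)) (w : Fin k → ℝ), D (w ∘ σ) = D w := by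
    intro σ w
    set T : (Fin k → ℝ) →L[ℝ] (Fin k → ℝ) :=
      ContinuousLinearMap.pi (fun i => ContinuousLinearMap.proj (σ i)) with hTdef
    have hTapp : ∀ u : Fin k → ℝ, T u = u ∘ σ := fun u => rfl
    have hFT : F ∘ T = F := by
      funext u
      show F (T u) = F u
      rw [hTapp]; exact hsym σ u
    have hfix : T (fun _ => m) = (fun _ => m) := rfl
    have hcomp := fderiv_comp (𝕜 := ℝ) (g := F) (f := ⇑T) (fun _ => m)
      (by rw [hfix]; exact hd) T.differentiableAt
    rw [hFT, hfix, T.fderiv] at hcomp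
    calc D (w ∘ σ) = D (T w) := by rw [hTapp]
    _ = (D.comp T) w := rfl
    _ = D w := by rw [← hcomp]
  set i0 : Fin k := ⟨0, hk⟩ with hi0
  set e : Fin k → (Fin k → ℝ) := fun i => fun j => if i = j then (1:ℝ) else 0 with he
  have hsingle : ∀ i, D (e i) = D (e i0) := by
    intro i
    have hcomp : (e i) ∘ (Equiv.swap i i0) = e i0 := by
      funext j
      simp only [he, Function.comp_apply]
      by_cases hj : j = i0
      · subst hj
        simp [Equiv.swap_apply_right]
      · have h1 : Equiv.swap i i0 j ≠ i := by
          intro h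
          apply hj
          have := (Equiv.swap i i0).injective (a₁ := j) (a₂ := i0)
          apply this
          rw [h, Equiv.swap_apply_right]
        simp [Ne.symm h1, Ne.symm hj]
    have h := hT (Equiv.swap i i0) (e i)
    rw [hcomp] at h
    exact h.symm
  have hDv : D v = ∑ i, v i * D (e i) := by
    conv_lhs => rw [pi_eq_sum_univ v]
    rw [map_sum]
    simp [he, map_smul]
  rw [hDv]
  have : ∑ i, v i * D (e i) = (∑ i, v i) * D (e i0) := by
    rw [Finset.sum_mul]
    exact Finset.sum_congr rfl fun i _ => by rw [hsingle i]
  rw [this, hv, zero_mul]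

/-- **The Averaging Principle** (Theorem 1 of the paper).
If `F : ℝ^k → ℝ` is interchangeable (symmetric) and twice continuously differentiable
near the diagonal point `(a,…,a)`, then `F μ = F (μ̄,…,μ̄) + O(‖μ - μ̄𝟙‖²)` for `μ` near
the diagonal, where `μ̄` is the arithmetic mean of the coordinates of `μ`. -/
theorem averaging_principle (k : ℕ) (hk : 1 ≤ k) (F : (Fin k → ℝ) → ℝ)
    (hsym : ∀ (σ : Equiv.Perm (Fin k)) (μ : Fin k → ℝ), F (μ ∘ σ) = F μ)
    (a : ℝ) (hF : ContDiffAt ℝ 2 F (fun _ => a)) :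
    ∃ C > (0:ℝ), ∃ δ > (0:ℝ), ∀ μ : Fin k → ℝ,
      ‖μ - (fun _ => a)‖ < δ →
      |F μ - F (fun _ => (∑ j, μ j) / k)| ≤
        C * ‖μ - (fun _ => (∑ j, μ j) / k)‖ ^ 2 := by
  haveI : Nonempty (Fin k) := ⟨⟨0, hk⟩⟩
  have hk' : (0:ℝ) < (k:ℝ) := by exact_mod_cast hk
  -- Lipschitz bound on the derivative near the diagonal point
  have hF1 : ContDiffAt ℝ 1 (fderiv ℝ F) (fun _ => a) :=
    hF.fderiv_right (by norm_num)
  obtain ⟨K, t, ht, hlip⟩ := hF1.exists_lipschitzOnWith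
  -- neighborhood of differentiability
  have hev : ∀ᶠ y in nhds (fun _ => a : Fin k → ℝ), DifferentiableAt ℝ F y := by
    filter_upwards [hF.eventually (by norm_num)] with y hy
    exact hy.differentiableAt (by norm_num)
  have hmem : t ∩ {y | DifferentiableAt ℝ F y} ∈ nhds (fun _ => a : Fin k → ℝ) :=
    Filter.inter_mem ht hev
  obtain ⟨δ, hδ, hball⟩ := Metric.mem_nhds_iff.mp hmem
  refine ⟨(K:ℝ) + 1, by positivity, δ, hδ, ?_⟩
  intro μ hμ
  set m : ℝ := (∑ j, μ j) / (k:ℝ) with hm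
  set p : Fin k → ℝ := fun _ => m with hp
  -- p is close to the diagonal point
  have hpa : ‖p - (fun _ => a)‖ ≤ ‖μ - (fun _ => a)‖ := by
    have h1 : p - (fun _ => a) = (fun _ : Fin k => m - a) := rfl
    rw [h1, pi_norm_const]
    have h2 : m - a = (∑ j, (μ j - a)) / (k:ℝ) := by
      rw [Finset.sum_sub_distrib, Finset.sum_const, Finset.card_univ, Fintype.card_fin]
      field_simp [hm]
      rw [hm, nsmul_eq_mul, sub_mul, div_mul_cancel₀ _ hk'.ne']; ring
    rw [h2, Real.norm_eq_abs, abs_div, abs_of_pos hk', div_le_iff₀ hk']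
    calc |∑ j, (μ j - a)| ≤ ∑ j, |μ j - a| := Finset.abs_sum_le_sum_abs _ _
    _ ≤ ∑ _j : Fin k, ‖μ - (fun _ => a)‖ := by
        refine Finset.sum_le_sum fun j _ => ?_
        have := norm_le_pi_norm (μ - (fun _ => a)) j
        simpa using this
    _ = ‖μ - (fun _ => a)‖ * (k:ℝ) := by
        rw [Finset.sum_const, Finset.card_univ, Fintype.card_fin, nsmul_eq_mul, mul_comm]
  have hpball : p ∈ Metric.ball (fun _ => a : Fin k → ℝ) δ := by
    rw [Metric.mem_ball, dist_eq_norm]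
    exact lt_of_le_of_lt hpa hμ
  have hμball : μ ∈ Metric.ball (fun _ => a : Fin k → ℝ) δ := by
    rw [Metric.mem_ball, dist_eq_norm]; exact hμ
  -- the segment from p to μ
  set S : Set (Fin k → ℝ) := segment ℝ p μ with hS
  have hSsub : S ⊆ Metric.ball (fun _ => a : Fin k → ℝ) δ :=
    (convex_ball _ _).segment_subset hpball hμball
  have hSt : S ⊆ t := fun x hx => (hball (hSsub hx)).1
  have hSdiff : ∀ x ∈ S, DifferentiableAt ℝ F x := fun x hx => (hball (hSsub hx)).2
  have hpS : p ∈ S := left_mem_segment ℝ p μ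
  have hμS : μ ∈ S := right_mem_segment ℝ p μ
  -- mean value inequality
  have hbound : ∀ x ∈ S, ‖fderiv ℝ F x - fderiv ℝ F p‖ ≤ (K:ℝ) * ‖μ - p‖ := by
    intro x hx
    have h1 : ‖fderiv ℝ F x - fderiv ℝ F p‖ ≤ (K:ℝ) * ‖x - p‖ := by
      have := hlip.dist_le_mul x (hSt hx) p (hSt hpS)
      rwa [dist_eq_norm, dist_eq_norm] at this
    have h2 : ‖x - p‖ ≤ ‖μ - p‖ := by
      obtain ⟨θ₁, θ₂, h₁, h₂, hsum, rfl⟩ := hx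
      have : θ₁ • p + θ₂ • μ - p = θ₂ • (μ - p) := by
        have : θ₁ = 1 - θ₂ := by linarith
        rw [this]; module
      rw [this, norm_smul, Real.norm_eq_abs, abs_of_nonneg h₂]
      nlinarith [norm_nonneg (μ - p)]
    calc ‖fderiv ℝ F x - fderiv ℝ F p‖ ≤ (K:ℝ) * ‖x - p‖ := h1
    _ ≤ (K:ℝ) * ‖μ - p‖ := by
        exact mul_le_mul_of_nonneg_left h2 (NNReal.coe_nonneg K)
  have hderiv : ∀ x ∈ S, HasFDerivWithinAt F (fderiv ℝ F x) S x :=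
    fun x hx => ((hSdiff x hx).hasFDerivAt).hasFDerivWithinAt
  have hmvt := Convex.norm_image_sub_le_of_norm_hasFDerivWithin_le'
    (φ := fderiv ℝ F p) (C := (K:ℝ) * ‖μ - p‖) hderiv hbound (convex_segment p μ) hpS hμS
  -- the derivative term vanishes by symmetry
  have hzero : fderiv ℝ F p (μ - p) = 0 := by
    refine fderiv_symm_diag k hk F hsym m ((hball hpball).2) (μ - p) ?_
    have : ∑ j, (μ j - m) = (∑ j, μ j) - (k:ℝ) * m := by
      rw [Finset.sum_sub_distrib, Finset.sum_const, Finset.card_univ, Fintype.card_fin,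
        nsmul_eq_mul]
    simp only [Pi.sub_apply]
    rw [this, hm]
    field_simp
    ring
  rw [hzero, sub_zero] at hmvt
  have habs : |F μ - F p| = ‖F μ - F p‖ := rfl
  rw [habs]
  calc ‖F μ - F p‖ ≤ (K:ℝ) * ‖μ - p‖ * ‖μ - p‖ := hmvt
  _ = (K:ℝ) * ‖μ - p‖ ^ 2 := by ring
  _ ≤ ((K:ℝ) + 1) * ‖μ - p‖ ^ 2 := by nlinarith [norm_nonneg (μ - p), sq_nonneg ‖μ - p‖]
end

section
/- Let k ≥ 1 and let F : ℝ^k → ℝ be weakly interchangeable (i.e., for all a, b ∈ ℝ and all indices i, j ∈ {1,…,k}, the value of F on the vector that equals a in every coordinate except for the value b in coordinate i equals its value on the vector that equals a everywhere except for the value b in coordinate j) and twice continuously differentiable on a neighborhood of the diagonal point a·𝟙 for some a ∈ ℝ. Then there exist constants C > 0 and δ > 0 such that for every μ ∈ ℝ^k with ‖μ − a·𝟙‖ < δ, |F(μ) − F(μ̄·𝟙)| ≤ C‖μ − μ̄·𝟙‖², where μ̄ = (1/k)∑_{j=1}^k μ_j. -/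
/-- **The Averaging Principle under weak interchangeability** (Corollary of the paper).
If `F : ℝ^k → ℝ` is weakly interchangeable (the value of `F` on a vector that is constant
except in one coordinate does not depend on which coordinate is exceptional) and twice
continuously differentiable near the diagonal point `(a,…,a)`, then
`F μ = F (μ̄,…,μ̄) + O(‖μ - μ̄𝟙‖²)` for `μ` near the diagonal. -/
theorem averaging_principle_weak (k : ℕ) (hk : 1 ≤ k) (F : (Fin k → ℝ) → ℝ)
    (hweak : ∀ (c b : ℝ) (i j : Fin k),
      F (Function.update (fun _ => c) i b) = F (Function.update (fun _ => c) j b))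
    (a : ℝ) (hF : ContDiffAt ℝ 2 F (fun _ => a)) :
    ∃ C > (0:ℝ), ∃ δ > (0:ℝ), ∀ μ : Fin k → ℝ,
      ‖μ - (fun _ => a)‖ < δ →
      |F μ - F (fun _ => (∑ j, μ j) / k)| ≤
        C * ‖μ - (fun _ => (∑ j, μ j) / k)‖ ^ 2 := by
  haveI : Nonempty (Fin k) := ⟨⟨0, hk⟩⟩
  have hk0 : (k : ℝ) ≠ 0 := by positivity
  set A : Fin k → ℝ := fun _ => a with hA
  -- the derivative of F is Lipschitz near A
  have hF1 : ContDiffAt ℝ 1 (fderiv ℝ F) A := hF.fderiv_right (by norm_num)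
  obtain ⟨K, t, ht, hlip⟩ := hF1.exists_lipschitzOnWith
  -- F is differentiable near A
  have hdiff : ∀ᶠ y in nhds A, DifferentiableAt ℝ F y :=
    (hF.eventually (by norm_num)).mono fun y hy => hy.differentiableAt (by norm_num)
  obtain ⟨ε, hε, hball⟩ := Metric.mem_nhds_iff.1 (Filter.inter_mem ht hdiff)
  refine ⟨(K : ℝ) + 1, by positivity, ε / 4, by positivity, fun μ hμ => ?_⟩
  set m : ℝ := (∑ j, μ j) / k with hm
  set v : Fin k → ℝ := fun _ => m with hv
  -- |m - a| ≤ ‖μ - A‖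
  have hcoord : ∀ j, |μ j - a| ≤ ‖μ - A‖ := by
    intro j
    have := norm_le_pi_norm (μ - A) j
    simpa [A] using this
  have hmean : |m - a| ≤ ‖μ - A‖ := by
    have h1 : m - a = (∑ j, (μ j - a)) / k := by
      rw [hm, Finset.sum_sub_distrib, Finset.sum_const]
      simp only [Finset.card_univ, Fintype.card_fin, nsmul_eq_mul]
      field_simp
    rw [h1, abs_div, abs_of_nonneg (by positivity : (0:ℝ) ≤ (k:ℝ))]
    rw [div_le_iff₀ (by positivity)]
    calc |∑ j, (μ j - a)| ≤ ∑ j, |μ j - a| := Finset.abs_sum_le_sum_abs _ _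
      _ ≤ ∑ _j : Fin k, ‖μ - A‖ := Finset.sum_le_sum fun j _ => hcoord j
      _ = ‖μ - A‖ * k := by simp [mul_comm]
  have hvA : ‖v - A‖ ≤ ‖μ - A‖ := by
    have : v - A = fun _ => m - a := by funext j; simp [hv, A]
    rw [this]
    simpa using hmean.trans_eq (by simp)
  -- v and μ lie in ball A ε
  have hvball : v ∈ Metric.ball A ε := by
    rw [Metric.mem_ball, dist_eq_norm]
    calc ‖v - A‖ ≤ ‖μ - A‖ := hvA
      _ < ε / 4 := hμ
      _ < ε := by linarith
  have hμball : μ ∈ Metric.ball A ε := by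
    rw [Metric.mem_ball, dist_eq_norm]; linarith
  -- the segment from v to μ lies in the ball
  have hseg : segment ℝ v μ ⊆ Metric.ball A ε :=
    (convex_ball A ε).segment_subset hvball hμball
  -- on the segment, points are within ‖μ - v‖ of v
  have hsegnorm : ∀ x ∈ segment ℝ v μ, ‖x - v‖ ≤ ‖μ - v‖ := by
    rintro x ⟨s, r, hs, hr, hsr, rfl⟩
    have : s • v + r • μ - v = r • (μ - v) := by
      have hs1 : s = 1 - r := by linarith
      rw [hs1]; module
    rw [this, norm_smul, Real.norm_eq_abs, abs_of_nonneg hr]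
    nlinarith [norm_nonneg (μ - v)]
  set e : Fin k → (Fin k → ℝ) := fun i => Pi.single i (1:ℝ) with he
  set φ := fderiv ℝ F v with hφ
  -- Taylor / mean value bound
  have htaylor : ‖F μ - F v - φ (μ - v)‖ ≤ ((K : ℝ) * ‖μ - v‖) * ‖μ - v‖ := by
    apply Convex.norm_image_sub_le_of_norm_fderiv_le'
        (fun x hx => (hball (hseg hx)).2) ?_ (convex_segment v μ)
        (left_mem_segment ℝ v μ) (right_mem_segment ℝ v μ)
    intro x hx
    have h1 : ‖fderiv ℝ F x - φ‖ ≤ (K : ℝ) * ‖x - v‖ := by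
      have := hlip.norm_sub_le (hball (hseg hx)).1
        (hball (hseg (left_mem_segment ℝ v μ))).1
      simpa [hφ] using this
    calc ‖fderiv ℝ F x - φ‖ ≤ (K : ℝ) * ‖x - v‖ := h1
      _ ≤ (K : ℝ) * ‖μ - v‖ := by
        apply mul_le_mul_of_nonneg_left (hsegnorm x hx) K.coe_nonneg
  -- all partial derivatives of F at the diagonal point v are equal
  have hFd : HasFDerivAt F φ v := ((hball hvball).2).hasFDerivAt
  have hpart : ∀ i : Fin k, HasDerivAt (fun b => F (Function.update (fun _ => m) i b))
      (φ (e i)) m := by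
    intro i
    have hupd : ∀ b : ℝ, Function.update (fun _ => m) i b = v + (b - m) • e i := by
      intro b; funext j
      by_cases hj : j = i
      · subst hj; simp [hv, he]
      · simp [hv, he, Function.update_apply, Pi.single_apply, hj]
    have hh : HasDerivAt (fun b : ℝ => v + (b - m) • e i) (e i) m := by
      have := (((hasDerivAt_id m).sub_const m).smul_const (e i)).const_add v
      simpa using this
    have hcomp : HasDerivAt (fun b => F (v + (b - m) • e i))
        (φ (e i)) m := by
      have hFd' : HasFDerivAt F φ (v + ((m:ℝ) - m) • e i) := by
        simpa using hFd
      exact hFd'.comp_hasDerivAt m hh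
    have : (fun b => F (Function.update (fun _ => m) i b))
        = fun b => F (v + (b - m) • e i) := by
      funext b; rw [hupd b]
    rw [this]; exact hcomp
  obtain ⟨i₀⟩ := (inferInstance : Nonempty (Fin k))
  have heq : ∀ i : Fin k, φ (e i) = φ (e i₀) := by
    intro i
    have h1 := hpart i
    have h2 : HasDerivAt (fun b => F (Function.update (fun _ => m) i b))
        (φ (e i₀)) m := by
      have : (fun b => F (Function.update (fun _ => m) i b))
          = fun b => F (Function.update (fun _ => m) i₀ b) := by
        funext b; exact hweak m b i i₀
      rw [this]; exact hpart i₀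
    exact h1.unique h2
  -- the linear term vanishes
  have hzero : φ (μ - v) = 0 := by
    have hdecomp : μ - v = ∑ i, ((μ - v) i) • e i := by
      funext j
      rw [Finset.sum_apply]
      simp [he, Pi.single_apply]
    rw [hdecomp, map_sum]
    have : ∀ i : Fin k, φ (((μ - v) i) • e i)
        = ((μ - v) i) * φ (e i₀) := by
      intro i; rw [map_smul, heq i]; simp
    rw [Finset.sum_congr rfl fun i _ => this i, ← Finset.sum_mul]
    have hsum : ∑ i, (μ - v) i = 0 := by
      simp only [Pi.sub_apply, Finset.sum_sub_distrib, hv]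
      rw [Finset.sum_const, hm]
      simp only [Finset.card_univ, Fintype.card_fin, nsmul_eq_mul]
      field_simp
      ring
    rw [hsum, zero_mul]
  have hfinal : |F μ - F v| ≤ (K : ℝ) * ‖μ - v‖ ^ 2 := by
    have : ‖F μ - F v‖ ≤ ((K : ℝ) * ‖μ - v‖) * ‖μ - v‖ := by
      simpa [hzero] using htaylor
    rw [Real.norm_eq_abs] at this
    nlinarith
  have hC : (K : ℝ) * ‖μ - v‖ ^ 2 ≤ ((K : ℝ) + 1) * ‖μ - v‖ ^ 2 := by
    nlinarith [sq_nonneg ‖μ - v‖]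
  exact hfinal.trans hC
end

section
/- Let k ≥ 1, let a > 0, and let F : ℝ^k → ℝ be interchangeable (i.e., F(μ_{σ(1)},…,μ_{σ(k)}) = F(μ_1,…,μ_k) for every permutation σ of {1,…,k}) and twice continuously differentiable on a neighborhood of the diagonal point a·𝟙 = (a,…,a). Then there exist constants C > 0 and δ > 0 such that for every μ ∈ ℝ^k with μ_i > 0 for all i and ‖μ − a·𝟙‖ < δ, |F(μ) − F(μ_G·𝟙)| ≤ C‖μ − μ̄_A·𝟙‖², where μ_G = (∏_{i=1}^k μ_i)^{1/k} is the geometric mean and μ̄_A = (1/k)∑_{i=1}^k μ_i is the arithmetic mean of the coordinates of μ. -/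
set_option linter.unnecessarySimpa false


lemma single_comp_swap {k : ℕ} (i j : Fin k) :
    (Pi.single i (1:ℝ)) ∘ ⇑(Equiv.swap i j) = Pi.single j (1:ℝ) := by
  funext x
  simp only [Function.comp_apply, Pi.single_apply, Equiv.swap_apply_def]
  split_ifs <;> simp_all

lemma fderiv_diag_zero_sum {k : ℕ} (hk : 1 ≤ k) (F : (Fin k → ℝ) → ℝ)
    (hsym : ∀ (σ : Equiv.Perm (Fin k)) (μ : Fin k → ℝ), F (μ ∘ σ) = F μ)
    (c : ℝ) (hd : DifferentiableAt ℝ F (fun _ => c))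
    (v : Fin k → ℝ) (hv : ∑ i, v i = 0) :
    fderiv ℝ F (fun _ => c) v = 0 := by
  set p : Fin k → ℝ := fun _ => c with hp
  have key : ∀ i j : Fin k, fderiv ℝ F p (Pi.single i (1:ℝ)) = fderiv ℝ F p (Pi.single j 1) := by
    intro i j
    set σ := Equiv.swap i j
    let L : (Fin k → ℝ) →L[ℝ] (Fin k → ℝ) := (LinearMap.funLeft ℝ ℝ ⇑σ).toContinuousLinearMap
    have hL : ∀ μ : Fin k → ℝ, L μ = μ ∘ ⇑σ := fun μ => rfl
    have hFL : F ∘ ⇑L = F := by funext μ; simpa [hL] using hsym σ μ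
    have hLp : L p = p := by funext x; rfl
    have h1 : fderiv ℝ (F ∘ ⇑L) p = (fderiv ℝ F (L p)).comp (fderiv ℝ (⇑L) p) := by
      apply fderiv_comp p (by rwa [hLp]) L.differentiableAt
    rw [hFL, hLp, L.fderiv] at h1
    have := congrArg (fun T => T (Pi.single i (1:ℝ))) h1
    simp only [ContinuousLinearMap.comp_apply] at this
    rw [this, hL]
    congr 1
    exact single_comp_swap i j
  have hone : ∀ i : Fin k, v i • (Pi.single i (1:ℝ) : Fin k → ℝ) = Pi.single i (v i) := by
    intro i; funext x; simp [Pi.single_apply, mul_ite]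
  have hv' : v = ∑ i, v i • (Pi.single i (1:ℝ) : Fin k → ℝ) := by
    conv_lhs => rw [← Finset.univ_sum_single v]
    exact Finset.sum_congr rfl (fun i _ => (hone i).symm)
  rw [hv', map_sum]
  have i0 : Fin k := ⟨0, hk⟩
  calc ∑ i, fderiv ℝ F p (v i • (Pi.single i (1:ℝ) : Fin k → ℝ))
      = ∑ i, v i • fderiv ℝ F p (Pi.single i0 1) := by
        refine Finset.sum_congr rfl fun i _ => ?_
        rw [map_smul, key i i0]
    _ = (∑ i, v i) • fderiv ℝ F p (Pi.single i0 1) := by rw [Finset.sum_smul]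
    _ = 0 := by rw [hv, zero_smul]

lemma avg_principle (k : ℕ) (hk : 1 ≤ k) (a : ℝ)
    (F : (Fin k → ℝ) → ℝ)
    (hsym : ∀ (σ : Equiv.Perm (Fin k)) (μ : Fin k → ℝ), F (μ ∘ σ) = F μ)
    (hF : ContDiffAt ℝ 2 F (fun _ => a)) :
    ∃ C > (0:ℝ), ∃ δ > (0:ℝ), ∀ μ : Fin k → ℝ, ‖μ - (fun _ => a)‖ < δ →
      |F μ - F (fun _ => (∑ i, μ i) / k)| ≤ C * ‖μ - (fun _ => (∑ i, μ i) / k)‖ ^ 2 := by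
  have hkR : (0:ℝ) < (k:ℝ) := by exact_mod_cast hk
  have hne : Nonempty (Fin k) := ⟨⟨0, hk⟩⟩
  set p₀ : Fin k → ℝ := fun _ => a with hp₀
  obtain ⟨u, hu, hFu⟩ := hF.contDiffOn le_rfl (by norm_num)
  set s := interior u with hs
  have hso : IsOpen s := isOpen_interior
  have hps : p₀ ∈ s := mem_interior_iff_mem_nhds.2 hu
  have hFs : ContDiffOn ℝ 2 F s := hFu.mono interior_subset
  obtain ⟨ε, hε, hball⟩ := Metric.isOpen_iff.1 hso p₀ hps
  set B := Metric.closedBall p₀ (ε / 2) with hB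
  have hBs : B ⊆ s := fun x hx =>
    hball (lt_of_le_of_lt (Metric.mem_closedBall.1 hx) (by linarith))
  have hBconv : Convex ℝ B := convex_closedBall _ _
  -- differentiability on s
  have hdiff : ∀ x ∈ s, DifferentiableAt ℝ F x := fun x hx =>
    (hFs.differentiableOn (by norm_num) x hx).differentiableAt (hso.mem_nhds hx)
  -- f' is C^1 on s, its derivative continuous on s
  have hf'1 : ContDiffOn ℝ 1 (fderiv ℝ F) s := hFs.fderiv_of_isOpen hso (by norm_num)
  have hf'c : ContinuousOn (fderiv ℝ (fderiv ℝ F)) s :=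
    hf'1.continuousOn_fderiv_of_isOpen hso le_rfl
  obtain ⟨M, hM⟩ := (isCompact_closedBall p₀ (ε/2)).exists_bound_of_continuousOn
    (f := fderiv ℝ (fderiv ℝ F)) (hf'c.mono hBs)
  have hM0 : 0 ≤ M := le_trans (norm_nonneg _) (hM p₀ (Metric.mem_closedBall_self (by linarith)))
  -- Lipschitz bound on f' over B
  have hlipf' : ∀ x ∈ B, ∀ z ∈ B, ‖fderiv ℝ F z - fderiv ℝ F x‖ ≤ M * ‖z - x‖ := by
    intro x hx z hz
    exact hBconv.norm_image_sub_le_of_norm_fderiv_le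
      (fun y hy => (hf'1.differentiableOn one_ne_zero y (hBs hy)).differentiableAt
        (hso.mem_nhds (hBs hy)))
      hM hx hz
  -- Taylor bound
  have taylor : ∀ x ∈ B, ∀ y ∈ B,
      ‖F y - F x - fderiv ℝ F x (y - x)‖ ≤ M * ‖y - x‖ * ‖y - x‖ := by
    intro x hx y hy
    have hseg : segment ℝ x y ⊆ B := hBconv.segment_subset hx hy
    refine Convex.norm_image_sub_le_of_norm_hasFDerivWithin_le'
      (fun z hz => (hdiff z (hBs (hseg hz))).hasFDerivAt.hasFDerivWithinAt)
      (fun z hz => ?_) (convex_segment x y) (left_mem_segment ℝ x y) (right_mem_segment ℝ x y)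
    have hzx : ‖z - x‖ ≤ ‖y - x‖ := by
      obtain ⟨t1, t2, h1, h2, h12, rfl⟩ := hz
      have heq : t1 • x + t2 • y - x = t2 • (y - x) := by
        have ht1 : t1 = 1 - t2 := by linarith
        rw [ht1]; module
      rw [heq, norm_smul, Real.norm_eq_abs, abs_of_nonneg h2]
      nlinarith [norm_nonneg (y - x)]
    calc ‖fderiv ℝ F z - fderiv ℝ F x‖ ≤ M * ‖z - x‖ := hlipf' x hx z (hseg hz)
      _ ≤ M * ‖y - x‖ := by nlinarith [norm_nonneg (z-x), norm_nonneg (y-x)]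
  refine ⟨M + 1, by linarith, ε/2, by linarith, fun μ hμ => ?_⟩
  set m := (∑ i, μ i) / k with hm
  set x : Fin k → ℝ := fun _ => m with hx
  have hma : |m - a| ≤ ‖μ - p₀‖ := by
    have h1 : ∀ i, |μ i - a| ≤ ‖μ - p₀‖ := fun i => by
      simpa using norm_le_pi_norm (μ - p₀) i
    have : m - a = (∑ i, (μ i - a)) / k := by
      rw [Finset.sum_sub_distrib, Finset.sum_const, Finset.card_univ, Fintype.card_fin,
        nsmul_eq_mul, hm, sub_div]
      congr 1
      field_simp
    rw [this, abs_div, abs_of_pos hkR, div_le_iff₀ hkR]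
    calc |∑ i, (μ i - a)| ≤ ∑ i, |μ i - a| := Finset.abs_sum_le_sum_abs _ _
      _ ≤ ∑ _i : Fin k, ‖μ - p₀‖ := Finset.sum_le_sum (fun i _ => h1 i)
      _ = ‖μ - p₀‖ * k := by simp [mul_comm]
  have hxB : x ∈ B := by
    have : ‖x - p₀‖ = |m - a| := by
      rw [show x - p₀ = fun _ => (m - a) from rfl]
      simpa using (Pi.norm_const (m - a) : ‖(fun _ : Fin k => (m-a))‖ = ‖m - a‖)
    rw [hB, Metric.mem_closedBall, dist_eq_norm, this]
    exact le_trans hma hμ.le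
  have hμB : μ ∈ B := by
    rw [hB, Metric.mem_closedBall, dist_eq_norm]; exact hμ.le
  have hxs : x ∈ s := hBs hxB
  have hzero : fderiv ℝ F x (μ - x) = 0 := by
    apply fderiv_diag_zero_sum hk F hsym m (hdiff x hxs)
    show ∑ i, (μ i - m) = 0
    rw [Finset.sum_sub_distrib, Finset.sum_const, Finset.card_univ, Fintype.card_fin,
      nsmul_eq_mul, hm]
    field_simp
    ring
  have := taylor x hxB μ hμB
  rw [hzero] at this
  simp only [sub_zero] at this
  calc |F μ - F x| ≤ M * ‖μ - x‖ * ‖μ - x‖ := by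
        simpa [Real.norm_eq_abs] using this
    _ ≤ (M + 1) * ‖μ - x‖ ^ 2 := by nlinarith [norm_nonneg (μ - x)]

/-- **Corollary 2 of the paper (geometric mean version)**: the Averaging Principle remains
valid when the arithmetic mean is replaced with the geometric mean. -/
theorem averaging_principle_geometric (k : ℕ) (hk : 1 ≤ k) (a : ℝ) (ha : 0 < a)
    (F : (Fin k → ℝ) → ℝ)
    (hsym : ∀ (σ : Equiv.Perm (Fin k)) (μ : Fin k → ℝ), F (μ ∘ σ) = F μ)
    (hF : ContDiffAt ℝ 2 F (fun _ => a)) :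
    ∃ C > (0:ℝ), ∃ δ > (0:ℝ), ∀ μ : Fin k → ℝ,
      (∀ i, 0 < μ i) → ‖μ - (fun _ => a)‖ < δ →
      |F μ - F (fun _ => (∏ i, μ i) ^ ((1 : ℝ) / k))| ≤
        C * ‖μ - (fun _ => (∑ i, μ i) / k)‖ ^ 2 := by
  have hkR : (0:ℝ) < (k:ℝ) := by exact_mod_cast hk
  have hne : Nonempty (Fin k) := ⟨⟨0, hk⟩⟩
  set p₀ : Fin k → ℝ := fun _ => a with hp₀
  set G : (Fin k → ℝ) → ℝ := fun μ => (∏ i, μ i) ^ ((1:ℝ)/k) with hG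
  have hGsym : ∀ (σ : Equiv.Perm (Fin k)) (μ : Fin k → ℝ), G (μ ∘ σ) = G μ := by
    intro σ μ
    simp only [hG]
    congr 1
    exact Equiv.prod_comp σ μ
  have hGval : ∀ c : ℝ, 0 < c → G (fun _ => c) = c := by
    intro c hc
    simp only [hG, Finset.prod_const, Finset.card_univ, Fintype.card_fin]
    rw [← Real.rpow_natCast c k, ← Real.rpow_mul hc.le]
    rw [mul_one_div, div_self (ne_of_gt hkR), Real.rpow_one]
  have hGdiff : ContDiffAt ℝ 2 G p₀ := by
    have h1 : ContDiffAt ℝ 2 (fun μ : Fin k → ℝ => ∏ i, μ i) p₀ :=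
      contDiffAt_prod (fun i _ => ((ContinuousLinearMap.proj i :
        (Fin k → ℝ) →L[ℝ] ℝ).contDiff).contDiffAt)
    have hval : (∏ i, p₀ i) = a ^ k := by
      simp [hp₀, Finset.prod_const]
    have h2 : ContDiffAt ℝ 2 (fun x : ℝ => x ^ ((1:ℝ)/k)) (∏ i, p₀ i) := by
      rw [hval]
      exact Real.contDiffAt_rpow_const_of_ne (ne_of_gt (pow_pos ha k))
    exact h2.comp p₀ h1
  -- Lipschitz along the diagonal
  have hdiag : ContDiffAt ℝ 1 (fun t : ℝ => F (fun _ => t)) a := by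
    have hd : ContDiff ℝ 1 (fun t : ℝ => (fun _ : Fin k => t)) :=
      contDiff_pi.2 fun _ => contDiff_id
    exact (hF.of_le (by norm_num)).comp a hd.contDiffAt
  obtain ⟨K, t, ht, hlip⟩ := hdiag.exists_lipschitzOnWith
  obtain ⟨r, hr, hrt⟩ := Metric.mem_nhds_iff.1 ht
  obtain ⟨C₁, hC₁, δ₁, hδ₁, H₁⟩ := avg_principle k hk a F hsym hF
  obtain ⟨C₂, hC₂, δ₂, hδ₂, H₂⟩ := avg_principle k hk a G hGsym hGdiff
  obtain ⟨δ, hδpos, hδ1, hδd1, hδd2, hδa, hδr⟩ :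
      ∃ δ : ℝ, 0 < δ ∧ δ ≤ 1 ∧ δ ≤ δ₁ ∧ δ ≤ δ₂ ∧ δ ≤ a ∧ δ ≤ r / (2 * (4 * C₂ + 1)) := by
    refine ⟨min 1 (min δ₁ (min δ₂ (min a (r / (2 * (4 * C₂ + 1)))))), ?_, ?_, ?_, ?_, ?_, ?_⟩
    · refine lt_min one_pos (lt_min hδ₁ (lt_min hδ₂ (lt_min ha ?_)))
      positivity
    · exact min_le_left _ _
    · exact le_trans (min_le_right _ _) (min_le_left _ _)
    · exact le_trans (min_le_right _ _) (le_trans (min_le_right _ _) (min_le_left _ _))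
    · exact le_trans (min_le_right _ _) (le_trans (min_le_right _ _)
        (le_trans (min_le_right _ _) (min_le_left _ _)))
    · exact le_trans (min_le_right _ _)
        (le_trans (min_le_right _ _) (le_trans (min_le_right _ _) (min_le_right _ _)))
  refine ⟨C₁ + K * C₂ + 1, by positivity, δ, hδpos, fun μ hμpos hμ => ?_⟩
  set m := (∑ i, μ i) / k with hm
  set x : Fin k → ℝ := fun _ => m with hx
  -- |m - a| ≤ ‖μ - p₀‖
  have hma : |m - a| ≤ ‖μ - p₀‖ := by
    have h1 : ∀ i, |μ i - a| ≤ ‖μ - p₀‖ := fun i => by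
      simpa using norm_le_pi_norm (μ - p₀) i
    have : m - a = (∑ i, (μ i - a)) / k := by
      rw [Finset.sum_sub_distrib, Finset.sum_const, Finset.card_univ, Fintype.card_fin,
        nsmul_eq_mul, hm, sub_div]
      congr 1
      field_simp
    rw [this, abs_div, abs_of_pos hkR, div_le_iff₀ hkR]
    calc |∑ i, (μ i - a)| ≤ ∑ i, |μ i - a| := Finset.abs_sum_le_sum_abs _ _
      _ ≤ ∑ _i : Fin k, ‖μ - p₀‖ := Finset.sum_le_sum (fun i _ => h1 i)
      _ = ‖μ - p₀‖ * k := by simp [mul_comm]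
  have hm_pos : 0 < m := by
    have : |m - a| < δ := lt_of_le_of_lt hma hμ
    have := abs_lt.1 this
    linarith
  have hxp₀ : ‖x - p₀‖ = |m - a| := by
    rw [show x - p₀ = fun _ : Fin k => (m - a) from rfl]
    simpa using (Pi.norm_const (m - a) : ‖(fun _ : Fin k => (m-a))‖ = ‖m - a‖)
  have hμx : ‖μ - x‖ ≤ 2 * δ := by
    calc ‖μ - x‖ = ‖(μ - p₀) - (x - p₀)‖ := by congr 1; abel
      _ ≤ ‖μ - p₀‖ + ‖x - p₀‖ := norm_sub_le _ _
      _ ≤ δ + δ := add_le_add hμ.le (le_trans (hxp₀ ▸ hma) hμ.le)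
      _ = 2 * δ := by ring
  -- bound |G μ - m|
  have hGm : |G μ - m| ≤ C₂ * ‖μ - x‖ ^ 2 := by
    have := H₂ μ (lt_of_lt_of_le hμ hδd2)
    rwa [← hm, ← hx, hGval m hm_pos] at this
  -- locations in the ball for the Lipschitz estimate
  have hmr : m ∈ Metric.ball a r := by
    rw [Metric.mem_ball, Real.dist_eq]
    calc |m - a| ≤ ‖μ - p₀‖ := hma
      _ < δ := hμ
      _ ≤ r / (2 * (4 * C₂ + 1)) := hδr
      _ < r := by
          rw [div_lt_iff₀ (by positivity)]
          nlinarith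
  have hGr : G μ ∈ Metric.ball a r := by
    rw [Metric.mem_ball, Real.dist_eq]
    have h1 : |G μ - a| ≤ |G μ - m| + |m - a| := abs_sub_le _ _ _
    have h2 : |G μ - m| ≤ C₂ * (2*δ)^2 := le_trans hGm
      (mul_le_mul_of_nonneg_left (by nlinarith [norm_nonneg (μ - x)]) hC₂.le)
    have hδsq : δ^2 ≤ δ := by nlinarith
    have : |G μ - a| ≤ 4 * C₂ * δ + δ := by nlinarith [lt_of_le_of_lt hma hμ, abs_nonneg (m - a)]
    have hfin : (4 * C₂ + 1) * δ ≤ r / 2 := by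
      have hpos : (0:ℝ) < 4 * C₂ + 1 := by positivity
      calc (4 * C₂ + 1) * δ ≤ (4 * C₂ + 1) * (r / (2 * (4 * C₂ + 1))) :=
            mul_le_mul_of_nonneg_left hδr hpos.le
        _ = r / 2 := by field_simp
    linarith
  -- assemble
  have hFmu : |F μ - F x| ≤ C₁ * ‖μ - x‖ ^ 2 := by
    have := H₁ μ (lt_of_lt_of_le hμ hδd1)
    rwa [← hm, ← hx] at this
  have hFdiag : |F x - F (fun _ => G μ)| ≤ K * |m - G μ| := by
    have := hlip.dist_le_mul m (hrt hmr) (G μ) (hrt hGr)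
    rw [Real.dist_eq, Real.dist_eq] at this
    exact this
  have habs : |F μ - F (fun _ => G μ)| ≤ |F μ - F x| + |F x - F (fun _ => G μ)| :=
    abs_sub_le _ _ _
  have hKnn : (0:ℝ) ≤ K := K.coe_nonneg
  have hN : (0:ℝ) ≤ ‖μ - x‖ ^ 2 := sq_nonneg _
  have h3 : (K:ℝ) * |m - G μ| ≤ (K:ℝ) * (C₂ * ‖μ - x‖ ^ 2) := by
    apply mul_le_mul_of_nonneg_left _ hKnn
    rw [abs_sub_comm]; exact hGm
  have hgoal : |F μ - F (fun _ => G μ)| ≤ (C₁ + K * C₂ + 1) * ‖μ - x‖ ^ 2 := by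
    calc |F μ - F (fun _ => G μ)| ≤ |F μ - F x| + |F x - F (fun _ => G μ)| := habs
      _ ≤ C₁ * ‖μ - x‖ ^ 2 + (K:ℝ) * (C₂ * ‖μ - x‖ ^ 2) := add_le_add hFmu (le_trans hFdiag h3)
      _ = (C₁ + (K:ℝ) * C₂) * ‖μ - x‖ ^ 2 := by ring
      _ ≤ (C₁ + (K:ℝ) * C₂ + 1) * ‖μ - x‖ ^ 2 :=
          mul_le_mul_of_nonneg_right (by linarith) hN
  exact hgoal
end

section
/- Let k ≥ 1, let a > 0, and let F : ℝ^k → ℝ be interchangeable (i.e., F(μ_{σ(1)},…,μ_{σ(k)}) = F(μ_1,…,μ_k) for every permutation σ of {1,…,k}) and twice continuously differentiable on a neighborhood of the diagonal point a·𝟙 = (a,…,a). Then there exist constants C > 0 and δ > 0 such that for every μ ∈ ℝ^k with μ_i > 0 for all i and ‖μ − a·𝟙‖ < δ, |F(μ) − F(μ_H·𝟙)| ≤ C‖μ − μ̄_A·𝟙‖², where μ_H = k/(∑_{i=1}^k 1/μ_i) is the harmonic mean and μ̄_A = (1/k)∑_{i=1}^k μ_i is the arithmetic mean of the coordinates of μ.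 -/
open Topology Metric Finset

lemma sym_fderiv_zero {k : ℕ} (hk : 0 < k) (F : (Fin k → ℝ) → ℝ)
    (hsym : ∀ (σ : Equiv.Perm (Fin k)) (μ : Fin k → ℝ), F (μ ∘ σ) = F μ)
    {c : ℝ} (hd : DifferentiableAt ℝ F (fun _ => c))
    (w : Fin k → ℝ) (hw : ∑ i, w i = 0) :
    fderiv ℝ F (fun _ => c) w = 0 := by
  have key : ∀ i j : Fin k,
      fderiv ℝ F (fun _ => c) (Pi.single i 1) = fderiv ℝ F (fun _ => c) (Pi.single j 1) := by
    intro i j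
    set σ := Equiv.swap i j with hσ
    set L : (Fin k → ℝ) →L[ℝ] (Fin k → ℝ) :=
      (LinearMap.funLeft ℝ ℝ σ).toContinuousLinearMap with hL
    have hLapp : ∀ v : Fin k → ℝ, L v = v ∘ σ := fun v => rfl
    have hFL : F ∘ ⇑L = F := by funext v; exact hsym σ v
    have hLc : L (fun _ => c) = (fun _ => c) := rfl
    have h1 : fderiv ℝ F (fun _ => c) = (fderiv ℝ F (fun _ => c)).comp L := by
      conv_lhs => rw [← hFL]
      rw [fderiv_comp _ (by rw [hLc]; exact hd) L.differentiableAt, hLc, L.fderiv]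
    have h2 := DFunLike.congr_fun h1 (Pi.single j (1:ℝ))
    simp only [ContinuousLinearMap.comp_apply] at h2
    have hiff : ∀ x : Fin k, σ x = j ↔ x = i := by
      intro x
      rw [hσ]
      constructor
      · intro h
        by_contra hxi
        rcases eq_or_ne x j with hxj | hxj
        · rw [hxj, Equiv.swap_apply_right] at h; exact hxi (h ▸ hxj)
        · rw [Equiv.swap_apply_of_ne_of_ne hxi hxj] at h; exact hxj h
      · intro h; rw [h, Equiv.swap_apply_left]
    have h3 : (Pi.single j (1:ℝ) : Fin k → ℝ) ∘ ⇑σ = Pi.single i 1 := by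
      funext x
      simp only [Function.comp_apply, Pi.single_apply]
      rw [if_congr (hiff x) rfl rfl]
    rw [h2, hLapp, h3]
  have hw' : ∑ j, (w j) • (Pi.single j (1:ℝ) : Fin k → ℝ) = w := by
    funext x
    simp [Finset.sum_apply, Pi.single_apply, mul_ite]
  obtain ⟨i0⟩ : Nonempty (Fin k) := ⟨⟨0, hk⟩⟩
  have h4 : fderiv ℝ F (fun _ => c) w = ∑ j, w j * fderiv ℝ F (fun _ => c) (Pi.single j 1) := by
    conv_lhs => rw [← hw']
    rw [map_sum]
    simp [smul_eq_mul]
  have h5 : ∑ j, w j * fderiv ℝ F (fun _ => c) (Pi.single j 1)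
      = (∑ j, w j) * fderiv ℝ F (fun _ => c) (Pi.single i0 1) := by
    rw [Finset.sum_mul]
    exact Finset.sum_congr rfl fun j _ => by rw [key j i0]
  rw [h4, h5, hw, zero_mul]

set_option maxHeartbeats 2000000 in
/-- **Corollary 2 of the paper (harmonic mean version)**: the Averaging Principle remains
valid when the arithmetic mean is replaced with the harmonic mean. -/
theorem averaging_principle_harmonic (k : ℕ) (hk : 1 ≤ k) (a : ℝ) (ha : 0 < a)
    (F : (Fin k → ℝ) → ℝ)
    (hsym : ∀ (σ : Equiv.Perm (Fin k)) (μ : Fin k → ℝ), F (μ ∘ σ) = F μ)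
    (hF : ContDiffAt ℝ 2 F (fun _ => a)) :
    ∃ C > (0:ℝ), ∃ δ > (0:ℝ), ∀ μ : Fin k → ℝ,
      (∀ i, 0 < μ i) → ‖μ - (fun _ => a)‖ < δ →
      |F μ - F (fun _ => (k : ℝ) / (∑ i, 1 / μ i))| ≤
        C * ‖μ - (fun _ => (∑ i, μ i) / k)‖ ^ 2 := by
  have hne : Nonempty (Fin k) := ⟨⟨0, hk⟩⟩
  have hkR : (0:ℝ) < k := by exact_mod_cast hk
  obtain ⟨K, t, ht, hlip⟩ := (hF.fderiv_right (m := 1) (by norm_num)).exists_lipschitzOnWith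
  obtain ⟨L, t', ht', hlipF⟩ :=
    (hF.of_le (by norm_num : (1 : WithTop ℕ∞) ≤ 2)).exists_lipschitzOnWith
  obtain ⟨u, hu, hcd⟩ := hF.contDiffOn (le_refl 2) (by simp)
  have hmem : u ∩ t ∩ t' ∈ 𝓝 (fun _ : Fin k => a) :=
    Filter.inter_mem (Filter.inter_mem hu ht) ht'
  obtain ⟨ε, hε, hball⟩ := Metric.mem_nhds_iff.1 hmem
  set δ : ℝ := min (ε/2) (a/2) with hδdef
  have hδpos : 0 < δ := lt_min (by linarith) (by linarith)
  have hδa : δ ≤ a/2 := min_le_right _ _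
  have hδε : δ < ε := lt_of_le_of_lt (min_le_left _ _) (by linarith)
  refine ⟨(K:ℝ) + 6*(L:ℝ)/a + 1, by positivity, δ, hδpos, ?_⟩
  intro μ hμpos hμδ
  set A : ℝ := (∑ i, μ i)/k with hAdef
  set S : ℝ := ∑ i, 1/μ i with hSdef
  set H : ℝ := (k:ℝ)/S with hHdef
  set Dn : ℝ := ‖μ - (fun _ => A)‖ with hDndef
  -- coordinatewise bounds
  have hco : ∀ i, |μ i - a| < δ := by
    intro i
    have h1 := norm_le_pi_norm (μ - fun _ => a) i
    simp only [Pi.sub_apply, Real.norm_eq_abs] at h1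
    exact lt_of_le_of_lt h1 hμδ
  have hlow : ∀ i, a - δ ≤ μ i := fun i => by have := (abs_lt.1 (hco i)).1; linarith
  have hhigh : ∀ i, μ i ≤ a + δ := fun i => by have := (abs_lt.1 (hco i)).2; linarith
  have ha2 : a/2 ≤ a - δ := by linarith
  have hadpos : 0 < a - δ := by linarith
  -- bounds on A
  have hAlow : a - δ ≤ A := by
    rw [hAdef, le_div_iff₀ hkR]
    calc (a - δ) * k = ∑ _i : Fin k, (a - δ) := by
          rw [Finset.sum_const, Finset.card_univ, Fintype.card_fin, nsmul_eq_mul, mul_comm]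
      _ ≤ ∑ i, μ i := Finset.sum_le_sum fun i _ => hlow i
  have hAhigh : A ≤ a + δ := by
    rw [hAdef, div_le_iff₀ hkR]
    calc ∑ i, μ i ≤ ∑ _i : Fin k, (a + δ) := Finset.sum_le_sum fun i _ => hhigh i
      _ = (a + δ) * k := by
          rw [Finset.sum_const, Finset.card_univ, Fintype.card_fin, nsmul_eq_mul, mul_comm]
  have hApos : 0 < A := lt_of_lt_of_le hadpos hAlow
  -- bounds on S
  have hSlow : (k:ℝ)/(a+δ) ≤ S := by
    have he : (k:ℝ)/(a+δ) = ∑ _i : Fin k, 1/(a+δ) := by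
      rw [Finset.sum_const, Finset.card_univ, Fintype.card_fin, nsmul_eq_mul]; ring
    rw [he, hSdef]
    exact Finset.sum_le_sum fun i _ => one_div_le_one_div_of_le (hμpos i) (hhigh i)
  have hShigh : S ≤ (k:ℝ)/(a-δ) := by
    have he : (k:ℝ)/(a-δ) = ∑ _i : Fin k, 1/(a-δ) := by
      rw [Finset.sum_const, Finset.card_univ, Fintype.card_fin, nsmul_eq_mul]; ring
    rw [he, hSdef]
    exact Finset.sum_le_sum fun i _ => one_div_le_one_div_of_le hadpos (hlow i)
  have hSpos : 0 < S := lt_of_lt_of_le (by positivity) hSlow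
  have hHlow : a - δ ≤ H := by
    rw [hHdef, le_div_iff₀ hSpos]
    calc (a - δ) * S ≤ (a - δ) * ((k:ℝ)/(a-δ)) :=
          mul_le_mul_of_nonneg_left hShigh (le_of_lt hadpos)
      _ = k := by field_simp
  -- key identity
  have hsum0 : ∑ i, (A - μ i) = 0 := by
    rw [Finset.sum_sub_distrib, Finset.sum_const, Finset.card_univ, Fintype.card_fin,
      nsmul_eq_mul, hAdef]
    field_simp
    ring
  have hid : ∑ i, (A - μ i)^2/(A*μ i) = A*S - k := by
    have hterm : ∀ i ∈ Finset.univ, (A - μ i)^2/(A*μ i)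
        = (A * (1/μ i) - 1) - (A - μ i)/A := by
      intro i _
      have h1 : μ i ≠ 0 := ne_of_gt (hμpos i)
      have h2 : A ≠ 0 := ne_of_gt hApos
      field_simp
    rw [Finset.sum_congr rfl hterm, Finset.sum_sub_distrib, Finset.sum_sub_distrib,
      ← Finset.mul_sum, ← Finset.sum_div, hsum0, ← hSdef, Finset.sum_const,
      Finset.card_univ, Fintype.card_fin, nsmul_eq_mul, mul_one]
    rw [zero_div, sub_zero]
  have hT_nonneg : 0 ≤ ∑ i, (A - μ i)^2/(A*μ i) :=
    Finset.sum_nonneg fun i _ => div_nonneg (sq_nonneg _) (le_of_lt (mul_pos hApos (hμpos i)))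
  have hHA : H ≤ A := by
    rw [hHdef, div_le_iff₀ hSpos]
    nlinarith [hid, hT_nonneg]
  have hHhigh : H ≤ a + δ := le_trans hHA hAhigh
  -- coordinate bound wrt A
  have hcoA : ∀ i, |A - μ i| ≤ Dn := by
    intro i
    have h1 := norm_le_pi_norm (μ - fun _ => A) i
    simp only [Pi.sub_apply, Real.norm_eq_abs] at h1
    rw [hDndef]
    calc |A - μ i| = |μ i - A| := abs_sub_comm _ _
      _ ≤ _ := h1
  have hDn_nonneg : 0 ≤ Dn := norm_nonneg _
  -- bound on the sum T
  have hTle : ∑ i, (A - μ i)^2/(A*μ i) ≤ (k:ℝ) * (Dn^2 / ((a/2)*(a/2))) := by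
    have he : (k:ℝ) * (Dn^2 / ((a/2)*(a/2))) = ∑ _i : Fin k, Dn^2 / ((a/2)*(a/2)) := by
      rw [Finset.sum_const, Finset.card_univ, Fintype.card_fin, nsmul_eq_mul]
    rw [he]
    refine Finset.sum_le_sum fun i _ => ?_
    have hnum : (A - μ i)^2 ≤ Dn^2 := by
      have h := hcoA i
      nlinarith [abs_nonneg (A - μ i), sq_abs (A - μ i)]
    have hden : (a/2)*(a/2) ≤ A * μ i := by
      have h1 : a/2 ≤ A := le_trans ha2 hAlow
      have h2 : a/2 ≤ μ i := le_trans ha2 (hlow i)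
      nlinarith
    exact div_le_div₀ (sq_nonneg Dn) hnum (by positivity) hden
  -- A - H ≤ (6/a) * Dn^2
  have hAH : A - H = (∑ i, (A - μ i)^2/(A*μ i)) / S := by
    rw [hid, hHdef]
    field_simp
  have hAHle : A - H ≤ 6/a * Dn^2 := by
    rw [hAH]
    have h1 : (∑ i, (A - μ i)^2/(A*μ i)) / S
        ≤ ((k:ℝ) * (Dn^2 / ((a/2)*(a/2)))) / ((k:ℝ)/(a+δ)) :=
      div_le_div₀ (by positivity) hTle (by positivity) hSlow
    have h2 : ((k:ℝ) * (Dn^2 / ((a/2)*(a/2)))) / ((k:ℝ)/(a+δ))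
        = Dn^2 * (4*(a+δ)/(a*a)) := by
      field_simp
      ring
    have h3 : 4*(a+δ)/(a*a) ≤ 6/a := by
      rw [div_le_div_iff₀ (by positivity) (by positivity)]
      nlinarith
    calc (∑ i, (A - μ i)^2/(A*μ i)) / S ≤ Dn^2 * (4*(a+δ)/(a*a)) := by rw [← h2]; exact h1
      _ ≤ Dn^2 * (6/a) := mul_le_mul_of_nonneg_left h3 (sq_nonneg Dn)
      _ = 6/a * Dn^2 := by ring
  -- ball memberships
  have hμball : μ ∈ Metric.ball (fun _ : Fin k => a) ε := by
    rw [Metric.mem_ball, dist_eq_norm]; exact lt_trans hμδ hδε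
  have hconst : ∀ c : ℝ, |c - a| ≤ δ →
      (fun _ : Fin k => c) ∈ Metric.ball (fun _ : Fin k => a) ε := by
    intro c hc
    rw [Metric.mem_ball]
    have hd : dist (fun _ : Fin k => c) (fun _ : Fin k => a) = dist c a := dist_pi_const c a
    rw [hd, Real.dist_eq]
    exact lt_of_le_of_lt hc hδε
  have hAabs : |A - a| ≤ δ := abs_le.2 ⟨by linarith, by linarith⟩
  have hHabs : |H - a| ≤ δ := abs_le.2 ⟨by linarith, by linarith⟩
  have hAball := hconst A hAabs
  have hHball := hconst H hHabs
  have hdiffball : ∀ z ∈ Metric.ball (fun _ : Fin k => a) ε, DifferentiableAt ℝ F z := by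
    intro z hz
    have hzu : u ∈ 𝓝 z :=
      Filter.mem_of_superset ((Metric.isOpen_ball).mem_nhds hz) (fun w hw => (hball hw).1.1)
    exact (hcd.differentiableOn (by norm_num)).differentiableAt hzu
  -- Taylor step
  have hsseg : segment ℝ (fun _ : Fin k => A) μ ⊆ Metric.ball (fun _ : Fin k => a) ε :=
    (convex_ball _ _).segment_subset hAball hμball
  have hbound : ∀ x ∈ segment ℝ (fun _ : Fin k => A) μ,
      ‖fderiv ℝ F x - fderiv ℝ F (fun _ : Fin k => A)‖ ≤ (K:ℝ) * Dn := by
    intro x hx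
    have hxt : x ∈ t := (hball (hsseg hx)).1.2
    have hAt : (fun _ : Fin k => A) ∈ t := (hball hAball).1.2
    have h1 := hlip.dist_le_mul x hxt (fun _ : Fin k => A) hAt
    have h3 := dist_add_dist_of_mem_segment hx
    have h2 : dist x (fun _ : Fin k => A) ≤ Dn := by
      have h4 : dist μ (fun _ : Fin k => A) = Dn := by rw [hDndef, dist_eq_norm]
      have h5 : 0 ≤ dist x μ := dist_nonneg
      calc dist x (fun _ : Fin k => A) = dist (fun _ : Fin k => A) x := dist_comm _ _
        _ ≤ dist (fun _ : Fin k => A) μ := by linarith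
        _ = Dn := by rw [dist_comm]; exact h4
    calc ‖fderiv ℝ F x - fderiv ℝ F (fun _ : Fin k => A)‖
        = dist (fderiv ℝ F x) (fderiv ℝ F (fun _ : Fin k => A)) := (dist_eq_norm _ _).symm
      _ ≤ K * dist x (fun _ : Fin k => A) := h1
      _ ≤ (K:ℝ) * Dn := mul_le_mul_of_nonneg_left h2 K.coe_nonneg
  have htaylor := Convex.norm_image_sub_le_of_norm_fderiv_le'
      (fun x hx => hdiffball x (hsseg hx)) hbound (convex_segment _ _)
      (left_mem_segment ℝ (fun _ : Fin k => A) μ) (right_mem_segment ℝ (fun _ : Fin k => A) μ)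
  have hker : fderiv ℝ F (fun _ : Fin k => A) (μ - fun _ => A) = 0 := by
    apply sym_fderiv_zero hk F hsym (hdiffball _ hAball)
    simp only [Pi.sub_apply]
    rw [Finset.sum_sub_distrib, Finset.sum_const, Finset.card_univ, Fintype.card_fin,
      nsmul_eq_mul, hAdef]
    field_simp
    ring
  rw [hker, sub_zero] at htaylor
  have hstep1 : |F μ - F (fun _ : Fin k => A)| ≤ (K:ℝ) * Dn^2 := by
    have he : ‖μ - fun _ : Fin k => A‖ = Dn := hDndef.symm
    calc |F μ - F (fun _ : Fin k => A)|
        = ‖F μ - F (fun _ : Fin k => A)‖ := (Real.norm_eq_abs _).symm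
      _ ≤ (K:ℝ) * Dn * ‖μ - fun _ : Fin k => A‖ := htaylor
      _ = (K:ℝ) * Dn^2 := by rw [he]; ring
  have hstep2 : |F (fun _ : Fin k => A) - F (fun _ : Fin k => H)| ≤ (L:ℝ) * (A - H) := by
    have h1 := hlipF.dist_le_mul (fun _ : Fin k => A) ((hball hAball).2)
      (fun _ : Fin k => H) ((hball hHball).2)
    have h2 : dist (fun _ : Fin k => A) (fun _ : Fin k => H) = dist A H := dist_pi_const A H
    calc |F (fun _ : Fin k => A) - F (fun _ : Fin k => H)|
        = dist (F (fun _ : Fin k => A)) (F (fun _ : Fin k => H)) := (Real.dist_eq _ _).symm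
      _ ≤ L * dist (fun _ : Fin k => A) (fun _ : Fin k => H) := h1
      _ = (L:ℝ) * |A - H| := by rw [h2, Real.dist_eq]
      _ = (L:ℝ) * (A - H) := by rw [abs_of_nonneg (by linarith)]
  have hfinal : |F μ - F (fun _ : Fin k => H)| ≤ ((K:ℝ) + 6*(L:ℝ)/a + 1) * Dn^2 := by
    have h1 := abs_sub_le (F μ) (F (fun _ : Fin k => A)) (F (fun _ : Fin k => H))
    have h2 : (L:ℝ) * (A - H) ≤ (L:ℝ) * (6/a * Dn^2) :=
      mul_le_mul_of_nonneg_left hAHle L.coe_nonneg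
    have h3 : (L:ℝ) * (6/a * Dn^2) = 6*(L:ℝ)/a * Dn^2 := by ring
    nlinarith [sq_nonneg Dn]
  exact hfinal
end

section
/- Let k ≥ 2, let F : ℝ^k → ℝ be interchangeable (i.e., invariant under all permutations of its arguments) and twice continuously differentiable on a neighborhood of the diagonal point a·𝟙 = (a,…,a), and set α := (1/2)(∂²F/∂μ_1∂μ_1(a·𝟙) − ∂²F/∂μ_1∂μ_2(a·𝟙)). Then, as μ → a·𝟙 along vectors μ ∈ ℝ^k whose arithmetic mean equals a (i.e., (1/k)∑_{i=1}^k μ_i = a), one has F(μ) = F(a·𝟙) + α ∑_{i=1}^k (μ_i − a)² + o(‖μ − a·𝟙‖²). -/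
open Asymptotics Filter Topology

section helpers
variable {k : ℕ}

lemma pi_repr (h : Fin k → ℝ) : ∑ i, h i • (Pi.single i 1 : Fin k → ℝ) = h := by
  ext j
  simp [Finset.sum_apply, Pi.single_apply]

lemma clm_pi_repr (T : (Fin k → ℝ) →L[ℝ] ℝ) (h : Fin k → ℝ) :
    T h = ∑ i, h i * T (Pi.single i 1) := by
  conv_lhs => rw [← pi_repr h]
  rw [map_sum]
  simp [smul_eq_mul]

lemma quad_repr (B : (Fin k → ℝ) →L[ℝ] (Fin k → ℝ) →L[ℝ] ℝ) (h : Fin k → ℝ) {A C : ℝ}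
    (hdiag : ∀ i, B (Pi.single i 1) (Pi.single i 1) = A)
    (hoff : ∀ i j, i ≠ j → B (Pi.single i 1) (Pi.single j 1) = C) :
    B h h = ((∑ i, h i) * (∑ i, h i)) * C + (∑ i, h i * h i) * (A - C) := by
  have step1 : B h h = ∑ i, ∑ j, h i * h j * B (Pi.single i 1) (Pi.single j 1) := by
    have h1 : B h = ∑ i, h i • B (Pi.single i 1) := by
      conv_lhs => rw [← pi_repr h]
      rw [map_sum]
      exact Finset.sum_congr rfl fun i _ => by rw [map_smul]
    rw [h1, ContinuousLinearMap.sum_apply]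
    refine Finset.sum_congr rfl fun i _ => ?_
    rw [ContinuousLinearMap.smul_apply, smul_eq_mul,
      clm_pi_repr (B (Pi.single i 1)) h, Finset.mul_sum]
    exact Finset.sum_congr rfl fun j _ => by ring
  have step2 : ∀ i j : Fin k, h i * h j * B (Pi.single i 1) (Pi.single j 1)
      = h i * h j * C + (if i = j then h i * h j * (A - C) else 0) := by
    intro i j
    rcases eq_or_ne i j with rfl | hij
    · rw [hdiag i, if_pos rfl]; ring
    · rw [hoff i j hij, if_neg hij]; ring
  rw [step1]
  simp only [step2, Finset.sum_add_distrib, Finset.sum_ite_eq, Finset.mem_univ, if_true]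
  simp only [← Finset.sum_mul, ← Finset.sum_mul_sum]

/-- Permutation as a continuous linear map on `Fin k → ℝ`. -/
noncomputable def permCLM (σ : Equiv.Perm (Fin k)) : (Fin k → ℝ) →L[ℝ] (Fin k → ℝ) :=
  ContinuousLinearMap.pi fun i => ContinuousLinearMap.proj (σ i)

lemma permCLM_single (σ : Equiv.Perm (Fin k)) (j : Fin k) :
    permCLM σ (Pi.single j (1:ℝ)) = Pi.single (σ.symm j) (1:ℝ) := by
  ext i
  simp only [permCLM, ContinuousLinearMap.pi_apply, ContinuousLinearMap.proj_apply,
    Pi.single_apply]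
  rcases eq_or_ne i (σ.symm j) with h | h
  · subst h; simp
  · have hne : j ≠ σ i := by
      intro hj
      exact h (by rw [hj]; simp)
    rw [if_neg (Ne.symm hne), if_neg h]

lemma fderiv_perm {F : (Fin k → ℝ) → ℝ}
    (hsym : ∀ (σ : Equiv.Perm (Fin k)) (μ : Fin k → ℝ), F (μ ∘ σ) = F μ)
    (σ : Equiv.Perm (Fin k)) {x : Fin k → ℝ}
    (hd : DifferentiableAt ℝ F (permCLM σ x)) :
    fderiv ℝ F x = (fderiv ℝ F (permCLM σ x)).comp (permCLM σ) := by
  have hFeq : F ∘ (permCLM σ) = F := funext fun μ => hsym σ μ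
  conv_lhs => rw [← hFeq]
  rw [fderiv_comp x hd (permCLM σ).differentiableAt, (permCLM σ).fderiv]

lemma snd_fderiv_perm {F : (Fin k → ℝ) → ℝ} {a : ℝ}
    (hsym : ∀ (σ : Equiv.Perm (Fin k)) (μ : Fin k → ℝ), F (μ ∘ σ) = F μ)
    (hF : ContDiffAt ℝ 2 F (fun _ => a)) (σ : Equiv.Perm (Fin k)) (u v : Fin k → ℝ) :
    fderiv ℝ (fderiv ℝ F) (fun _ => a) u v =
      fderiv ℝ (fderiv ℝ F) (fun _ => a) (permCLM σ u) (permCLM σ v) := by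
  set x₀ : Fin k → ℝ := fun _ => a with hx₀
  set g := fderiv ℝ F with hg
  set B := fderiv ℝ g x₀ with hB
  have hgd : DifferentiableAt ℝ g x₀ :=
    (hF.fderiv_right (m := 1) (by norm_num)).differentiableAt one_ne_zero
  have hdiff : ∀ᶠ x in 𝓝 x₀, DifferentiableAt ℝ F x := by
    filter_upwards [hF.eventually (by simp)] with x hx
    exact hx.differentiableAt (by norm_num)
  set Ψ : ((Fin k → ℝ) →L[ℝ] ℝ) →L[ℝ] ((Fin k → ℝ) →L[ℝ] ℝ) :=
    (ContinuousLinearMap.compL ℝ (Fin k → ℝ) (Fin k → ℝ) ℝ).flip (permCLM σ) with hΨ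
  have hΨ_apply : ∀ T : (Fin k → ℝ) →L[ℝ] ℝ, Ψ T = T.comp (permCLM σ) := fun T => rfl
  have hLx₀ : permCLM σ x₀ = x₀ := rfl
  have hev : g =ᶠ[𝓝 x₀] fun x => Ψ (g (permCLM σ x)) := by
    have hcont : Tendsto (permCLM σ) (𝓝 x₀) (𝓝 x₀) := by
      simpa [hLx₀] using (permCLM σ).continuous.tendsto x₀
    filter_upwards [hcont.eventually hdiff] with x hx
    rw [hΨ_apply]
    exact fderiv_perm hsym σ hx
  have hB2 : B = Ψ.comp (B.comp (permCLM σ)) := by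
    have h1 : DifferentiableAt ℝ (g ∘ (permCLM σ)) x₀ := by
      have := hgd.comp x₀ (permCLM σ).differentiableAt (g := g)
      simpa [hLx₀] using this
    calc B = fderiv ℝ (⇑Ψ ∘ (g ∘ (permCLM σ))) x₀ := hev.fderiv_eq
      _ = Ψ.comp (fderiv ℝ (g ∘ (permCLM σ)) x₀) := by
          rw [fderiv_comp x₀ Ψ.differentiableAt h1, Ψ.fderiv]
      _ = Ψ.comp (B.comp (permCLM σ)) := by
          rw [fderiv_comp x₀ (by simpa [hLx₀] using hgd) (permCLM σ).differentiableAt,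
            (permCLM σ).fderiv, hLx₀]
  conv_lhs => rw [hB2]
  rfl

theorem taylor2 {E : Type*} [NormedAddCommGroup E] [NormedSpace ℝ E]
    (f : E → ℝ) (x₀ : E) (hf : ContDiffAt ℝ 2 f x₀) :
    (fun x => f x - f x₀ - fderiv ℝ f x₀ (x - x₀) -
        (1/2) * fderiv ℝ (fderiv ℝ f) x₀ (x - x₀) (x - x₀))
      =o[𝓝 x₀] fun x => ‖x - x₀‖ ^ 2 := by
  set g := fderiv ℝ f with hg_def
  set B := fderiv ℝ g x₀ with hB_def
  have hgd : DifferentiableAt ℝ g x₀ :=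
    (hf.fderiv_right (m := 1) (by norm_num)).differentiableAt one_ne_zero
  have hgB : HasFDerivAt g B x₀ := hgd.hasFDerivAt
  have hdiff : ∀ᶠ x in 𝓝 x₀, DifferentiableAt ℝ f x := by
    filter_upwards [hf.eventually (by simp)] with x hx
    exact hx.differentiableAt (by norm_num)
  have Bsymm : ∀ v w, B v w = B w v := by
    intro v w
    apply second_derivative_symmetric_of_eventually (f := f) (f' := g) (x := x₀)
    · filter_upwards [hdiff] with y hy; exact hy.hasFDerivAt
    · exact hgB
  rw [isLittleO_iff]
  intro ε hε
  have hsmall := isLittleO_iff.1 hgB.isLittleO hε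
  rcases Metric.eventually_nhds_iff.1 (hdiff.and hsmall) with ⟨δ, hδ, hball⟩
  have : ∀ x ∈ Metric.ball x₀ δ,
      |f x - f x₀ - g x₀ (x - x₀) - (1/2) * B (x - x₀) (x - x₀)| ≤ ε * ‖x - x₀‖ ^ 2 := by
    intro x hx
    set φ : E → ℝ := fun y => f y - g x₀ (y - x₀) - (1/2) * B (y - x₀) (y - x₀) with hφ
    set φ' : E → E →L[ℝ] ℝ := fun y => g y - g x₀ - B (y - x₀) with hφ'
    have key : ∀ y ∈ Metric.closedBall x₀ ‖x - x₀‖,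
        HasFDerivWithinAt φ (φ' y) (Metric.closedBall x₀ ‖x - x₀‖) y := by
      intro y hy
      have hyδ : dist y x₀ < δ :=
        lt_of_le_of_lt (Metric.mem_closedBall.1 hy) (by simpa [dist_eq_norm] using hx)
      have h1 : HasFDerivAt f (g y) y := (hball hyδ).1.hasFDerivAt
      have h2 : HasFDerivAt (fun y : E => g x₀ (y - x₀)) (g x₀) y := by
        have := ((g x₀).hasFDerivAt (x := y)).sub_const (g x₀ x₀)
        simpa [map_sub] using this
      have h3 : HasFDerivAt (fun y : E => (1/2 : ℝ) * B (y - x₀) (y - x₀)) (B (y - x₀)) y := by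
        have hb := (B.isBoundedBilinearMap.hasFDerivAt (y - x₀, y - x₀))
        have hp : HasFDerivAt (fun y : E => ((y - x₀, y - x₀) : E × E))
            ((ContinuousLinearMap.id ℝ E).prod (ContinuousLinearMap.id ℝ E)) y :=
          HasFDerivAt.prodMk ((hasFDerivAt_id y).sub_const x₀) ((hasFDerivAt_id y).sub_const x₀)
        have hcomp := (hb.comp y hp).const_mul (1/2 : ℝ)
        refine HasFDerivAt.congr_fderiv hcomp ?_
        ext v
        simp [B.isBoundedBilinearMap.deriv_apply, Bsymm v (y - x₀)]
        ring
      exact ((h1.sub h2).sub h3).hasFDerivWithinAt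
    have bound : ∀ y ∈ Metric.closedBall x₀ ‖x - x₀‖, ‖φ' y‖ ≤ ε * ‖x - x₀‖ := by
      intro y hy
      have hyδ : dist y x₀ < δ :=
        lt_of_le_of_lt (Metric.mem_closedBall.1 hy) (by simpa [dist_eq_norm] using hx)
      have := (hball hyδ).2
      calc ‖φ' y‖ ≤ ε * ‖y - x₀‖ := this
        _ ≤ ε * ‖x - x₀‖ := by
            apply mul_le_mul_of_nonneg_left _ hε.le
            simpa [dist_eq_norm] using Metric.mem_closedBall.1 hy
    have hx_mem : x ∈ Metric.closedBall x₀ ‖x - x₀‖ := by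
      simp [Metric.mem_closedBall, dist_eq_norm]
    have hmv := (convex_closedBall x₀ ‖x - x₀‖).norm_image_sub_le_of_norm_hasFDerivWithin_le
      key bound (Metric.mem_closedBall_self (norm_nonneg _)) hx_mem
    have : ‖φ x - φ x₀‖ ≤ ε * ‖x - x₀‖ * ‖x - x₀‖ := hmv
    have hφx : φ x - φ x₀ = f x - f x₀ - g x₀ (x - x₀) - (1/2) * B (x - x₀) (x - x₀) := by
      simp [hφ]; ring
    rw [hφx] at this
    calc |f x - f x₀ - g x₀ (x - x₀) - (1/2) * B (x - x₀) (x - x₀)| ≤ ε * ‖x - x₀‖ * ‖x - x₀‖ := this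
      _ = ε * ‖x - x₀‖ ^ 2 := by ring
  filter_upwards [Metric.ball_mem_nhds x₀ hδ] with x hx
  have := this x hx
  simpa [abs_of_nonneg (sq_nonneg ‖x - x₀‖)] using this

end helpers

/-- The paper's formula for the leading-order `O(ε²)` error term of the Averaging Principle:
as `μ → a𝟙` along vectors whose arithmetic mean equals `a`,
`F(μ) = F(a𝟙) + α ∑ᵢ (μᵢ - a)² + o(‖μ - a𝟙‖²)`, where
`α = (1/2)(∂²F/∂μ₁²(a𝟙) - ∂²F/∂μ₁∂μ₂(a𝟙))`. -/
theorem averaging_error_term (k : ℕ) (hk : 2 ≤ k) (F : (Fin k → ℝ) → ℝ)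
    (hsym : ∀ (σ : Equiv.Perm (Fin k)) (μ : Fin k → ℝ), F (μ ∘ σ) = F μ)
    (a : ℝ) (hF : ContDiffAt ℝ 2 F (fun _ => a)) (α : ℝ)
    (hα : α = (1 / 2) *
      (fderiv ℝ (fderiv ℝ F) (fun _ => a) (Pi.single (⟨0, by omega⟩ : Fin k) 1)
          (Pi.single (⟨0, by omega⟩ : Fin k) 1) -
        fderiv ℝ (fderiv ℝ F) (fun _ => a) (Pi.single (⟨0, by omega⟩ : Fin k) 1)
          (Pi.single (⟨1, by omega⟩ : Fin k) 1))) :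
    (fun μ : Fin k → ℝ => F μ - F (fun _ => a) - α * ∑ i, (μ i - a) ^ 2)
      =o[nhdsWithin (fun _ => a) {μ : Fin k → ℝ | (∑ i, μ i) / k = a}]
        fun μ : Fin k → ℝ => ‖μ - (fun _ => a)‖ ^ 2 := by
  have hk0 : (0:ℕ) < k := by omega
  set i0 : Fin k := ⟨0, by omega⟩ with hi0
  set i1 : Fin k := ⟨1, by omega⟩ with hi1
  have hi01 : i0 ≠ i1 := by simp [hi0, hi1, Fin.ext_iff]
  set x₀ : Fin k → ℝ := fun _ => a with hx₀
  set g := fderiv ℝ F with hg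
  set B := fderiv ℝ g x₀ with hB
  -- first derivative is constant on coordinates
  have hc : ∀ i : Fin k, g x₀ (Pi.single i 1) = g x₀ (Pi.single i0 1) := by
    intro i
    have hd : DifferentiableAt ℝ F (permCLM (Equiv.swap i0 i) x₀) :=
      hF.differentiableAt (by norm_num)
    have := fderiv_perm hsym (Equiv.swap i0 i) hd
    have happ := congrArg (fun T => T (Pi.single i0 (1:ℝ))) this
    simp only [ContinuousLinearMap.comp_apply] at happ
    rw [permCLM_single] at happ
    simpa [Equiv.symm_swap, Equiv.swap_apply_left,
      show permCLM (Equiv.swap i0 i) x₀ = x₀ from rfl] using happ.symm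
  -- second derivative invariance
  have hBsym : ∀ (σ : Equiv.Perm (Fin k)) (u v : Fin k → ℝ),
      B u v = B (permCLM σ u) (permCLM σ v) := fun σ u v =>
    snd_fderiv_perm hsym hF σ u v
  have hdiag : ∀ i : Fin k, B (Pi.single i 1) (Pi.single i 1)
      = B (Pi.single i0 1) (Pi.single i0 1) := by
    intro i
    have := hBsym (Equiv.swap i0 i) (Pi.single i0 1) (Pi.single i0 1)
    rw [permCLM_single, Equiv.symm_swap, Equiv.swap_apply_left] at this
    exact this.symm
  have hoff : ∀ i j : Fin k, i ≠ j → B (Pi.single i 1) (Pi.single j 1)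
      = B (Pi.single i0 1) (Pi.single i1 1) := by
    intro i j hij
    set s1 : Equiv.Perm (Fin k) := Equiv.swap i i0 with hs1
    have hs1j : s1 j ≠ i0 := by
      intro h
      exact hij (s1.injective (by rw [h, hs1, Equiv.swap_apply_left])).symm
    set σ : Equiv.Perm (Fin k) := s1.trans (Equiv.swap (s1 j) i1) with hσ
    have hσi : σ i = i0 := by
      rw [hσ, Equiv.trans_apply, hs1, Equiv.swap_apply_left,
        Equiv.swap_apply_of_ne_of_ne (Ne.symm hs1j) hi01]
    have hσj : σ j = i1 := by
      rw [hσ, Equiv.trans_apply, Equiv.swap_apply_left]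
    have hsi : σ.symm i0 = i := by rw [← hσi, Equiv.symm_apply_apply]
    have hsj : σ.symm i1 = j := by rw [← hσj, Equiv.symm_apply_apply]
    have := hBsym σ (Pi.single i0 1) (Pi.single i1 1)
    rw [permCLM_single, permCLM_single, hsi, hsj] at this
    exact this.symm
  -- Taylor expansion restricted to the constraint set
  have taylor := (taylor2 F x₀ hF).mono
    (nhdsWithin_le_nhds (s := {μ : Fin k → ℝ | (∑ i, μ i) / k = a}))
  refine taylor.congr' ?_ EventuallyEq.rfl
  filter_upwards [self_mem_nhdsWithin] with μ hμ
  have hμ' : ∑ i, μ i = k * a := by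
    have hk' : (k:ℝ) ≠ 0 := by positivity
    field_simp at hμ
    linarith [hμ]
  have hsum : ∑ i, (μ - x₀) i = 0 := by
    simp only [Pi.sub_apply, hx₀]
    rw [Finset.sum_sub_distrib, hμ', Finset.sum_const, Finset.card_fin, nsmul_eq_mul]
    ring
  have hlin : g x₀ (μ - x₀) = 0 := by
    rw [clm_pi_repr (g x₀) (μ - x₀)]
    calc ∑ i, (μ - x₀) i * g x₀ (Pi.single i 1)
        = ∑ i, (μ - x₀) i * g x₀ (Pi.single i0 1) := by
          exact Finset.sum_congr rfl fun i _ => by rw [hc i]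
      _ = (∑ i, (μ - x₀) i) * g x₀ (Pi.single i0 1) := by rw [Finset.sum_mul]
      _ = 0 := by rw [hsum, zero_mul]
  have hquad : B (μ - x₀) (μ - x₀)
      = (∑ i, (μ - x₀) i * (μ - x₀) i) *
        (B (Pi.single i0 1) (Pi.single i0 1) - B (Pi.single i0 1) (Pi.single i1 1)) := by
    rw [quad_repr B (μ - x₀) hdiag hoff, hsum]
    ring
  have hcoord : ∀ i, (μ - x₀) i = μ i - a := fun i => rfl
  have : (1/2 : ℝ) * B (μ - x₀) (μ - x₀) = α * ∑ i, (μ i - a) ^ 2 := by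
    rw [hquad, hα]
    simp only [hcoord]
    rw [show (∑ x, (μ x - a) * (μ x - a)) = ∑ x, (μ x - a) ^ 2 from
      Finset.sum_congr rfl fun x _ => by ring]
    ring
  rw [hlin, this]
  ring
end

section
/- Let λ, μ_1, μ_2 > 0 with ρ := λ/(μ_1+μ_2) < 1. Let p : ℕ → ℝ be a summable sequence of nonnegative reals with ∑_{n=0}^∞ p_n = 1, and let q_{10}, q_{01} ≥ 0 satisfy p_1 = q_{10} + q_{01} together with the steady-state balance equations: λ p_0 = μ_1 q_{10} + μ_2 q_{01}; (λ/2) p_0 + μ_2 p_2 = (λ + μ_1) q_{10}; (λ/2) p_0 + μ_1 p_2 = (λ + μ_2) q_{01}; λ q_{10} + λ q_{01} + (μ_1+μ_2) p_3 = (λ + μ_1 + μ_2) p_2; and λ p_n + (μ_1+μ_2) p_{n+2} = (λ + μ_1 + μ_2) p_{n+1} for every n ≥ 2. Then the sequence (n p_n) is summable and ∑_{n=0}^∞ n p_n = (1/(1−ρ)²) · 1 / ( (1/ρ) · (2μ_1μ_2/(μ_1+μ_2)²) + 1/(1−ρ) ). -/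
/-- **Lemma 3 of the paper**: the expected number of customers in an M/M/2 queue with
heterogeneous servers. If the steady-state probabilities `p n` (with the one-customer
state split as `p 1 = q₁₀ + q₀₁`) satisfy the balance equations, then the expected number
of customers is `(1/(1-ρ)²)·(1/((1/ρ)·(2μ₁μ₂/(μ₁+μ₂)²) + 1/(1-ρ)))`, `ρ = λ/(μ₁+μ₂)`. -/
theorem MM2_expected_customers (lam μ₁ μ₂ : ℝ) (hlam : 0 < lam) (hμ₁ : 0 < μ₁)
    (hμ₂ : 0 < μ₂) (hρ : lam / (μ₁ + μ₂) < 1)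
    (p : ℕ → ℝ) (hpos : ∀ n, 0 ≤ p n) (hsummable : Summable p) (htotal : ∑' n, p n = 1)
    (q₁₀ q₀₁ : ℝ) (hq₁₀ : 0 ≤ q₁₀) (hq₀₁ : 0 ≤ q₀₁) (hp1 : p 1 = q₁₀ + q₀₁)
    (e1 : lam * p 0 = μ₁ * q₁₀ + μ₂ * q₀₁)
    (e2 : lam / 2 * p 0 + μ₂ * p 2 = (lam + μ₁) * q₁₀)
    (e3 : lam / 2 * p 0 + μ₁ * p 2 = (lam + μ₂) * q₀₁)
    (e4 : lam * q₁₀ + lam * q₀₁ + (μ₁ + μ₂) * p 3 = (lam + μ₁ + μ₂) * p 2)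
    (e5 : ∀ n, 2 ≤ n → lam * p n + (μ₁ + μ₂) * p (n + 2) = (lam + μ₁ + μ₂) * p (n + 1)) :
    Summable (fun n : ℕ => (n : ℝ) * p n) ∧
      ∑' n : ℕ, (n : ℝ) * p n =
        (1 / (1 - lam / (μ₁ + μ₂)) ^ 2) *
          (1 / ((1 / (lam / (μ₁ + μ₂))) * (2 * μ₁ * μ₂ / (μ₁ + μ₂) ^ 2) +
            1 / (1 - lam / (μ₁ + μ₂)))) := by
  have hμ : (0:ℝ) < μ₁ + μ₂ := by linarith
  set ρ : ℝ := lam / (μ₁ + μ₂) with hρdef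
  have hρ0 : 0 < ρ := div_pos hlam hμ
  have hρ1 : ρ < 1 := hρ
  have hρabs : ‖ρ‖ < 1 := by rw [Real.norm_eq_abs, abs_of_pos hρ0]; exact hρ1
  have h1ρ : (0:ℝ) < 1 - ρ := by linarith
  -- geometric recursion
  have hp2 : (μ₁ + μ₂) * p 2 = lam * p 1 := by linear_combination e2 + e3 - e1 - lam * hp1
  have key : ∀ n : ℕ, (μ₁ + μ₂) * p (n + 2) = lam * p (n + 1) := by
    intro n
    induction n with
    | zero => exact hp2
    | succ k ih =>
      cases k with
      | zero => linear_combination e4 + lam * hp1 + hp2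
      | succ m =>
        have h5 := e5 (m + 2) (by omega)
        linear_combination h5 + ih
  have hgeo : ∀ n : ℕ, p (n + 1) = ρ ^ n * p 1 := by
    intro n
    induction n with
    | zero => simp
    | succ k ih =>
      have hk := key k
      have : p (k + 2) = ρ * p (k + 1) := by
        rw [hρdef]; field_simp; linarith [hk]
      rw [this, ih]; ring
  -- p0 relation
  have hp0' : lam * (μ₁ + μ₂) * p 0 = 2 * μ₁ * μ₂ * p 1 := by
    have h2l : (0:ℝ) < 2 * lam + μ₁ + μ₂ := by linarith
    have hmul : (2 * lam + μ₁ + μ₂) * (lam * (μ₁ + μ₂) * p 0) =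
        (2 * lam + μ₁ + μ₂) * (2 * μ₁ * μ₂ * p 1) := by
      linear_combination (-2 * (μ₁ + μ₂) * (lam + μ₁) * (lam + μ₂)) * hp1 +
        (2 * (μ₁ + μ₂) * (lam + μ₂)) * e2 + (2 * (μ₁ + μ₂) * (lam + μ₁)) * e3 -
        (2 * (lam * (μ₁ + μ₂) + μ₁ ^ 2 + μ₂ ^ 2)) * hp2
    exact mul_left_cancel₀ (ne_of_gt h2l) hmul
  -- summability
  have Sgeo : Summable (fun n : ℕ => ρ ^ n) := summable_geometric_of_lt_one hρ0.le hρ1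
  have Snr : Summable (fun n : ℕ => (n : ℝ) * ρ ^ n) := by
    have := summable_pow_mul_geometric_of_norm_lt_one 1 hρabs (R := ℝ)
    simpa using this
  have Sshift : Summable (fun n : ℕ => ((n : ℝ) + 1) * ρ ^ n * p 1) := by
    have : (fun n : ℕ => ((n : ℝ) + 1) * ρ ^ n * p 1) =
        fun n : ℕ => ((n : ℝ) * ρ ^ n) * p 1 + ρ ^ n * p 1 := by
      funext n; ring
    rw [this]
    exact ((Snr.mul_right _).add (Sgeo.mul_right _))
  have heq : (fun n : ℕ => ((n + 1 : ℕ) : ℝ) * p (n + 1)) =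
      fun n : ℕ => ((n : ℝ) + 1) * ρ ^ n * p 1 := by
    funext n; rw [hgeo n]; push_cast; ring
  have Ssum : Summable (fun n : ℕ => (n : ℝ) * p n) := by
    apply (summable_nat_add_iff (f := fun n : ℕ => (n : ℝ) * p n) 1).mp
    exact heq ▸ Sshift
  refine ⟨Ssum, ?_⟩
  -- compute tsums
  have htsum1 : ∑' n : ℕ, (n : ℝ) * p n = (ρ / (1 - ρ) ^ 2 + (1 - ρ)⁻¹) * p 1 := by
    rw [Summable.tsum_eq_zero_add Ssum]
    simp only [Nat.cast_zero, zero_mul, zero_add]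
    have : ∑' n : ℕ, ((n + 1 : ℕ) : ℝ) * p (n + 1) =
        ∑' n : ℕ, ((n : ℝ) + 1) * ρ ^ n * p 1 := by rw [heq]
    rw [this]
    have : ∑' n : ℕ, ((n : ℝ) + 1) * ρ ^ n * p 1 =
        (∑' n : ℕ, (((n : ℝ) * ρ ^ n) + ρ ^ n)) * p 1 := by
      rw [← tsum_mul_right]; congr 1; funext n; ring
    rw [this, Summable.tsum_add Snr Sgeo, tsum_coe_mul_geometric_of_norm_lt_one hρabs,
      tsum_geometric_of_lt_one hρ0.le hρ1]
  have htotal' : p 0 + (1 - ρ)⁻¹ * p 1 = 1 := by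
    have h := Summable.tsum_eq_zero_add hsummable
    have hsh : ∑' n : ℕ, p (n + 1) = (1 - ρ)⁻¹ * p 1 := by
      have hf : (fun n : ℕ => p (n + 1)) = fun n : ℕ => ρ ^ n * p 1 := funext hgeo
      rw [hf, tsum_mul_right, tsum_geometric_of_lt_one hρ0.le hρ1]
    rw [htotal, hsh] at h
    linarith
  -- final algebra
  have hD1 : (1 / ρ) * (2 * μ₁ * μ₂ / (μ₁ + μ₂) ^ 2) * p 1 = p 0 := by
    rw [hρdef]
    field_simp
    linear_combination (-1) * hp0'
  have hD : ((1 / ρ) * (2 * μ₁ * μ₂ / (μ₁ + μ₂) ^ 2) + 1 / (1 - ρ)) * p 1 = 1 := by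
    rw [add_mul, hD1, one_div]
    exact htotal'
  have hDne : ((1 / ρ) * (2 * μ₁ * μ₂ / (μ₁ + μ₂) ^ 2) + 1 / (1 - ρ)) ≠ 0 := by
    intro h; rw [h, zero_mul] at hD; exact one_ne_zero hD.symm
  have hp1val : p 1 = 1 / ((1 / ρ) * (2 * μ₁ * μ₂ / (μ₁ + μ₂) ^ 2) + 1 / (1 - ρ)) :=
    eq_one_div_of_mul_eq_one_left (by linear_combination hD)
  rw [htsum1, ← hp1val]
  have hc : ρ / (1 - ρ) ^ 2 + (1 - ρ)⁻¹ = 1 / (1 - ρ) ^ 2 := by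
    field_simp
    ring
  rw [hc]
end

section
/- Let E be a real normed vector space, let k ≥ 1, and let R : E^k → ℝ be interchangeable (i.e., R(G_{σ(1)},…,G_{σ(k)}) = R(G_1,…,G_k) for every permutation σ of {1,…,k}) and twice continuously Fréchet differentiable on a neighborhood of the diagonal point (F̄,…,F̄) ∈ E^k for some F̄ ∈ E. Let H_1,…,H_k ∈ E satisfy ∑_{j=1}^k H_j = 0. Then, as ε → 0, R(F̄ + εH_1, …, F̄ + εH_k) = R(F̄, …, F̄) + O(ε²). -/
open Asymptotics Filter

/-- **The Averaging Principle for functionals** (appendix of the paper, equation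
`R[F1,...,Fk]`): if `R : E^k → ℝ` is interchangeable and twice continuously Fréchet
differentiable near the diagonal point `(F̄,…,F̄)`, and `∑ Hⱼ = 0`, then
`R(F̄+εH₁,…,F̄+εH_k) = R(F̄,…,F̄) + O(ε²)` as `ε → 0`. -/
theorem averaging_principle_functionals (E : Type*) [NormedAddCommGroup E]
    [NormedSpace ℝ E] (k : ℕ) (hk : 1 ≤ k) (R : (Fin k → E) → ℝ)
    (hsym : ∀ (σ : Equiv.Perm (Fin k)) (G : Fin k → E), R (G ∘ σ) = R G)
    (Fbar : E) (hR : ContDiffAt ℝ 2 R (fun _ => Fbar))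
    (H : Fin k → E) (hH : ∑ j, H j = 0) :
    (fun ε : ℝ => R (fun j => Fbar + ε • H j) - R (fun _ => Fbar))
      =O[nhds 0] fun ε : ℝ => ε ^ 2 := by
  classical
  set D : Fin k → E := fun _ => Fbar with hD
  set Λ : (Fin k → E) →L[ℝ] ℝ := fderiv ℝ R D with hΛ
  -- Step 1: Λ is invariant under permutations
  have hRdiff : DifferentiableAt ℝ R D := hR.differentiableAt (by norm_num)
  have hΛinv : ∀ (σ : Equiv.Perm (Fin k)) (G : Fin k → E), Λ (G ∘ σ) = Λ G := by
    intro σ G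
    set P : (Fin k → E) →L[ℝ] (Fin k → E) :=
      ContinuousLinearMap.pi (fun j => ContinuousLinearMap.proj (σ j)) with hP
    have hPapp : ∀ G : Fin k → E, P G = G ∘ σ := fun _ => rfl
    have hPD : P D = D := rfl
    have h1 : HasFDerivAt (R ∘ P) (Λ.comp P) D := by
      have := (hRdiff.hasFDerivAt).comp D (P.hasFDerivAt (x := D))
      simpa [hPD] using this
    have h2 : (R ∘ P) = R := by
      funext G'; exact hsym σ G'
    have h3 : Λ.comp P = Λ := by
      have := h1.fderiv
      rw [h2] at this
      rw [hΛ]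
      exact this.symm
    calc Λ (G ∘ σ) = (Λ.comp P) G := by rw [ContinuousLinearMap.comp_apply, hPapp]
    _ = Λ G := by rw [h3]
  -- Step 2: Λ H = 0
  have hΛH : Λ H = 0 := by
    set i0 : Fin k := ⟨0, hk⟩
    have hsingle : ∀ (j : Fin k) (x : E), Λ (Pi.single j x) = Λ (Pi.single i0 x) := by
      intro j x
      have : (Pi.single j x : Fin k → E) ∘ (Equiv.swap i0 j) = Pi.single i0 x := by
        funext m
        simp only [Function.comp_apply, Pi.single_apply]
        have h : (Equiv.swap i0 j) m = j ↔ m = i0 := by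
          rw [Equiv.swap_apply_eq_iff, Equiv.swap_apply_right]
        rw [if_congr h rfl rfl]
      rw [← this, hΛinv]
    have e1 : Λ H = ∑ j, Λ (Pi.single j (H j)) := by
      conv_lhs => rw [← Finset.univ_sum_single H]
      exact map_sum Λ _ _
    rw [e1]
    have e2 : ∀ j : Fin k, Λ (Pi.single j (H j)) = Λ (Pi.single i0 (H j)) :=
      fun j => hsingle j _
    simp_rw [e2]
    rw [← map_sum]
    have e3 : ∑ j, (Pi.single i0 (H j) : Fin k → E) = Pi.single i0 (∑ j, H j) := by
      funext m
      simp only [Finset.sum_apply, Pi.single_apply]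
      by_cases hm : m = i0 <;> simp [hm]
    rw [e3, hH]
    simp
  -- Step 3: the curve and its derivative
  set g : ℝ → ℝ := fun ε => R (fun j => Fbar + ε • H j) with hg
  have hγ : ContDiff ℝ 2 (fun ε : ℝ => (fun j => Fbar + ε • H j : Fin k → E)) := by
    apply contDiff_pi.2
    intro j
    exact contDiff_const.add (contDiff_id.smul contDiff_const)
  have hγ0 : (fun j => Fbar + (0:ℝ) • H j) = D := by funext j; simp [hD]
  have hg2 : ContDiffAt ℝ 2 g 0 := by
    have hR' : ContDiffAt ℝ 2 R ((fun ε : ℝ => (fun j => Fbar + ε • H j : Fin k → E)) 0) := by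
      simpa [hγ0] using hR
    exact ContDiffAt.comp 0 hR' hγ.contDiffAt
  -- Step 4: g'(0) = Λ H = 0
  have hγd : HasDerivAt (fun ε : ℝ => (fun j => Fbar + ε • H j : Fin k → E)) H 0 := by
    rw [hasDerivAt_pi]
    intro j
    have : HasDerivAt (fun ε : ℝ => ε • H j) ((1:ℝ) • H j) 0 :=
      (hasDerivAt_id (0:ℝ)).smul_const (H j)
    simpa using this.const_add Fbar
  have hgd : HasDerivAt g 0 0 := by
    have hRfd : HasFDerivAt R Λ ((fun ε : ℝ => (fun j => Fbar + ε • H j : Fin k → E)) 0) := by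
      simpa [hγ0] using hRdiff.hasFDerivAt
    have := hRfd.comp_hasDerivAt 0 hγd
    rw [hΛH] at this
    exact this
  -- Step 5: Taylor estimate
  obtain ⟨u, hu, hgu⟩ := hg2.contDiffOn (le_refl 2) (by simp)
  obtain ⟨δ, hδ, hsub⟩ := Metric.mem_nhds_iff.mp hu
  have hball : ContDiffOn ℝ 2 g (Metric.ball 0 δ) := hgu.mono hsub
  have h2 : (2 : WithTop ℕ∞) = 1 + 1 := by norm_num
  rw [h2, contDiffOn_succ_iff_deriv_of_isOpen Metric.isOpen_ball] at hball
  obtain ⟨hdiff, -, hd1⟩ := hball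
  have hd'at : DifferentiableAt ℝ (deriv g) 0 :=
    (hd1.contDiffAt (Metric.ball_mem_nhds 0 hδ)).differentiableAt (by norm_num)
  have hderiv0 : deriv g 0 = 0 := hgd.deriv
  have hO : (fun x => deriv g x) =O[nhds 0] fun x : ℝ => x := by
    have := hd'at.hasDerivAt.hasFDerivAt.isBigO_sub
    simpa [hderiv0] using this
  obtain ⟨C, hC, hbd⟩ := hO.exists_pos
  rw [IsBigOWith] at hbd
  obtain ⟨δ', hδ', hbd'⟩ := Metric.eventually_nhds_iff.mp hbd
  set r : ℝ := min δ δ' with hr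
  have hrpos : 0 < r := lt_min hδ hδ'
  have hg0 : g 0 = R D := by rw [hg]; simp only [hγ0]
  rw [isBigO_iff]
  refine ⟨C, ?_⟩
  filter_upwards [Metric.ball_mem_nhds (0:ℝ) hrpos] with x hx
  have hxr : |x| < r := by simpa [Real.dist_eq] using hx
  have hmem : ∀ t ∈ Set.uIcc (0:ℝ) x, t ∈ Metric.ball (0:ℝ) r := by
    intro t ht
    have h1 : |t| ≤ |x| := by
      rcases Set.mem_uIcc.mp ht with ⟨h0, hx1⟩ | ⟨hx1, h0⟩
      · rw [abs_of_nonneg h0]; exact le_trans hx1 (le_abs_self x)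
      · rw [abs_of_nonpos h0]; exact le_trans (neg_le_neg hx1) (le_abs_self (-x) |>.trans_eq (abs_neg x))
    simpa [Real.dist_eq] using lt_of_le_of_lt h1 hxr
  have key : ‖g x - g 0‖ ≤ C * ‖x‖ * ‖x - 0‖ := by
    refine Convex.norm_image_sub_le_of_norm_hasDerivWithin_le
      (f' := deriv g) (fun t ht => ?_) (fun t ht => ?_) (convex_uIcc 0 x)
      (Set.left_mem_uIcc) (Set.right_mem_uIcc)
    · have htball : t ∈ Metric.ball (0:ℝ) δ :=
        Metric.ball_subset_ball (min_le_left δ δ') (hmem t ht)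
      exact ((hdiff.differentiableAt
        (Metric.isOpen_ball.mem_nhds htball)).hasDerivAt).hasDerivWithinAt
    · have h1 : ‖deriv g t‖ ≤ C * ‖t‖ := by
        exact hbd' (Metric.mem_ball.mp (Metric.ball_subset_ball (min_le_right δ δ') (hmem t ht)))
      refine h1.trans (mul_le_mul_of_nonneg_left ?_ hC.le)
      have h2 : |t| ≤ |x| := by
        rcases Set.mem_uIcc.mp ht with ⟨h0, hx1⟩ | ⟨hx1, h0⟩
        · rw [abs_of_nonneg h0]; exact le_trans hx1 (le_abs_self x)
        · rw [abs_of_nonpos h0]; exact le_trans (neg_le_neg hx1) (le_abs_self (-x) |>.trans_eq (abs_neg x))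
      simpa [Real.norm_eq_abs] using h2
  rw [hg0] at key
  calc ‖R (fun j => Fbar + x • H j) - R D‖ ≤ C * ‖x‖ * ‖x - 0‖ := key
    _ = C * ‖x ^ 2‖ := by
        rw [sub_zero]
        simp only [Real.norm_eq_abs, abs_pow]
        ring
end
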